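/- arXiv:2506.18909 — 4 statements merged into one kernel-verified Lean document; each statement's English description precedes it below -/
import Mathlib

section
/- Let X be a complex Banach space, n ≥ 1, and let f : [0,∞)^n → X be locally Bochner integrable. If λ⁰ = (λ₁⁰,…,λₙ⁰) ∈ Ω_abs(f), then there exists a finite real constant M > 0 such that for all (t₁,…,tₙ) ∈ [0,∞)^n one has ∫₀^{t₁}…∫₀^{tₙ} ‖f(s₁,…,sₙ)‖ ds₁…dsₙ ≤ M · exp( max(0, Re λ₁⁰)·t₁ + … + max(0, Re λₙ⁰)·tₙ ). -/
open MeasureTheory Set Filter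

noncomputable section

/-- The nonnegative orthant `[0,∞)^n`. -/
def orthant (n : ℕ) : Set (Fin n → ℝ) := {t | ∀ j, 0 ≤ t j}

/-- The box `[0,t₁] × … × [0,tₙ]`. -/
def box {n : ℕ} (t : Fin n → ℝ) : Set (Fin n → ℝ) := Set.univ.pi fun j => Set.Icc 0 (t j)

variable {X : Type*} [NormedAddCommGroup X] [NormedSpace ℂ X]

/-- The Laplace kernel `t ↦ e^{-λ₁t₁-…-λₙtₙ} f(t)`. -/
def lapKer {n : ℕ} (lam : Fin n → ℂ) (f : (Fin n → ℝ) → X) : (Fin n → ℝ) → X :=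
  fun t => Complex.exp (-(∑ j, lam j * (t j : ℂ))) • f t

/-- Absolute convergence of the Laplace integral at `lam`: membership in `Ω_abs(f)`. -/
def OmegaAbs {n : ℕ} (f : (Fin n → ℝ) → X) (lam : Fin n → ℂ) : Prop :=
  IntegrableOn (lapKer lam f) (orthant n)

/-- The (absolutely convergent) Laplace transform `(Lf)(λ)`. -/
def lapTr {n : ℕ} (f : (Fin n → ℝ) → X) (lam : Fin n → ℂ) : X :=
  ∫ t in orthant n, lapKer lam f t

/-- The truncated Laplace integral `I(f,λ,t)`. -/
def truncInt {n : ℕ} (f : (Fin n → ℝ) → X) (lam : Fin n → ℂ) (t : Fin n → ℝ) : X :=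
  ∫ s in box t, lapKer lam f s

/-- Convergence of the Laplace integral at `lam` with value `F`. -/
def LapConvTo {n : ℕ} (f : (Fin n → ℝ) → X) (lam : Fin n → ℂ) (F : X) : Prop :=
  ∀ ε > 0, ∃ M > 0, ∀ t : Fin n → ℝ, (∀ j, M < t j) → ‖truncInt f lam t - F‖ < ε

/-- Convergence of the Laplace integral at `lam`: membership in `Ω(f)`. -/
def OmegaConv {n : ℕ} (f : (Fin n → ℝ) → X) (lam : Fin n → ℂ) : Prop :=
  ∃ F, LapConvTo f lam F

/-- Boundedness of all truncated Laplace integrals: membership in `Ω_b(f)`. -/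
def OmegaBdd {n : ℕ} (f : (Fin n → ℝ) → X) (lam : Fin n → ℂ) : Prop :=
  ∃ C, ∀ t : Fin n → ℝ, ‖truncInt f lam t‖ ≤ C

/-- Local Bochner integrability on `[0,∞)^n`. -/
def LocInt {n : ℕ} (f : (Fin n → ℝ) → X) : Prop :=
  ∀ t : Fin n → ℝ, IntegrableOn f (box t)

/-- If `λ⁰ ∈ Ω_abs(f)`, then the antiderivative of `‖f‖` grows at most like
`M · exp(max(0,Re λ₁⁰)t₁ + … + max(0,Re λₙ⁰)tₙ)`. -/
theorem antiderivative_exponential_bound [CompleteSpace X]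
    (n : ℕ) (hn : 1 ≤ n) (f : (Fin n → ℝ) → X) (hf : LocInt f)
    (lam0 : Fin n → ℂ) (h0 : OmegaAbs f lam0) :
    ∃ M > 0, ∀ t ∈ orthant n,
      (∫ s in box t, ‖f s‖) ≤ M * Real.exp (∑ j, max 0 ((lam0 j).re) * t j) := by
  classical
  set g := lapKer lam0 f with hgdef
  have horth : MeasurableSet (orthant n) := by
    have : orthant n = Set.univ.pi fun _ : Fin n => Set.Ici (0:ℝ) := by
      ext s; simp [orthant, Set.mem_pi, Pi.le_def]
    rw [this]
    exact MeasurableSet.univ_pi fun _ => measurableSet_Ici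
  have hboxmeas : ∀ t : Fin n → ℝ, MeasurableSet (box t) := fun t =>
    MeasurableSet.univ_pi fun _ => measurableSet_Icc
  have hboxsub : ∀ t : Fin n → ℝ, box t ⊆ orthant n := by
    intro t s hs j
    exact (hs j (Set.mem_univ j)).1
  set C := ∫ s in orthant n, ‖g s‖ with hCdef
  have hCnn : 0 ≤ C := setIntegral_nonneg horth fun s _ => norm_nonneg _
  have hnorm : ∀ s : Fin n → ℝ, ‖g s‖ = Real.exp (-(∑ j, (lam0 j).re * s j)) * ‖f s‖ := by
    intro s
    simp only [hgdef, lapKer, norm_smul, Complex.norm_exp]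
    congr 2
    simp [Complex.re_sum, Complex.mul_re]
  refine ⟨C + 1, by linarith, ?_⟩
  intro t ht
  set E := Real.exp (∑ j, max 0 ((lam0 j).re) * t j) with hEdef
  have hEpos : 0 < E := Real.exp_pos _
  have hgint : IntegrableOn g (box t) := h0.mono_set (hboxsub t)
  -- pointwise bound on box t
  have hpt : ∀ s ∈ box t, ‖f s‖ ≤ E * ‖g s‖ := by
    intro s hs
    have hsum : ∑ j, (lam0 j).re * s j ≤ ∑ j, max 0 ((lam0 j).re) * t j := by
      apply Finset.sum_le_sum
      intro j _
      have hsj := hs j (Set.mem_univ j)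
      calc (lam0 j).re * s j ≤ max 0 ((lam0 j).re) * s j :=
            mul_le_mul_of_nonneg_right (le_max_right _ _) hsj.1
        _ ≤ max 0 ((lam0 j).re) * t j :=
            mul_le_mul_of_nonneg_left hsj.2 (le_max_left _ _)
    have : ‖f s‖ = Real.exp (∑ j, (lam0 j).re * s j) * ‖g s‖ := by
      rw [hnorm s, ← mul_assoc, ← Real.exp_add]
      simp
    rw [this]
    exact mul_le_mul_of_nonneg_right (Real.exp_le_exp.2 hsum) (norm_nonneg _)
  have h1 : (∫ s in box t, ‖f s‖) ≤ ∫ s in box t, E * ‖g s‖ := by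
    refine setIntegral_mono_on (hf t).norm (hgint.norm.const_mul E) (hboxmeas t) hpt
  have h2 : (∫ s in box t, E * ‖g s‖) = E * ∫ s in box t, ‖g s‖ :=
    integral_const_mul E _
  have h3 : (∫ s in box t, ‖g s‖) ≤ C := by
    refine setIntegral_mono_set h0.norm ?_ ?_
    · exact Filter.Eventually.of_forall fun s => norm_nonneg _
    · exact HasSubset.Subset.eventuallyLE (hboxsub t)
  calc (∫ s in box t, ‖f s‖) ≤ E * ∫ s in box t, ‖g s‖ := by rw [← h2]; exact h1
    _ ≤ E * C := mul_le_mul_of_nonneg_left h3 hEpos.le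
    _ ≤ (C + 1) * E := by nlinarith
end
end

section
/- Let X be a complex Banach space, n ≥ 1, f : [0,∞)^n → X locally Bochner integrable, and let G(t₁,…,tₙ) = ∫₀^{t₁}…∫₀^{tₙ} f(s₁,…,sₙ) ds₁…dsₙ. Suppose λ⁰ = (λ₁⁰,…,λₙ⁰) ∈ ℂⁿ and there is M > 0 such that for all t ∈ [0,∞)^n, ‖G(t)‖ ≤ M · Σ_{S ⊆ {1,…,n}} ∏_{j ∈ S} e^{(Re λⱼ⁰)tⱼ} ∏_{j ∉ S} ∫₀^{tⱼ} e^{(Re λⱼ⁰)s} ds. If λ = (λ₁,…,λₙ) ∈ ℂⁿ satisfies Re λⱼ > max(Re λⱼ⁰, 0) for all j, then λ ∈ Ω_abs(G), λ ∈ Ω(f) ∩ Ω_b(f), and (Lf)(λ₁,…,λₙ) = λ₁·…·λₙ · (LG)(λ₁,…,λₙ). -/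
open MeasureTheory Set Filter

noncomputable section

variable {X : Type*} [NormedAddCommGroup X] [NormedSpace ℂ X]

lemma measurableSet_box {n : ℕ} (t : Fin n → ℝ) : MeasurableSet (box t) :=
  MeasurableSet.univ_pi fun _ => measurableSet_Icc
lemma isCompact_box {n : ℕ} (t : Fin n → ℝ) : IsCompact (box t) :=
  isCompact_univ_pi fun _ => isCompact_Icc
lemma mem_box {n : ℕ} {t s : Fin n → ℝ} : s ∈ box t ↔ ∀ j, 0 ≤ s j ∧ s j ≤ t j := by
  simp only [box, Set.mem_univ_pi, Set.mem_Icc]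
lemma pi_indicator_prod {n : ℕ} {M : Type*} [CommMonoidWithZero M] (A : Fin n → Set ℝ)
    (g : Fin n → ℝ → M) (u : Fin n → ℝ) :
    (Set.univ.pi A).indicator (fun u => ∏ j, g j (u j)) u = ∏ j, (A j).indicator (g j) (u j) := by
  by_cases h : u ∈ Set.univ.pi A
  · rw [Set.indicator_of_mem h]
    exact Finset.prod_congr rfl fun j _ => (Set.indicator_of_mem (h j (Set.mem_univ j)) _).symm
  · rw [Set.indicator_of_notMem h]
    rw [Set.mem_univ_pi] at h
    push_neg at h
    obtain ⟨j, hj⟩ := h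
    exact (Finset.prod_eq_zero (Finset.mem_univ j) (Set.indicator_of_notMem hj _)).symm
lemma setIntegral_pi_prod {𝕜 : Type*} [RCLike 𝕜] {n : ℕ} (A : Fin n → Set ℝ)
    (hA : ∀ j, MeasurableSet (A j)) (g : Fin n → ℝ → 𝕜) :
    ∫ u in Set.univ.pi A, ∏ j, g j (u j) = ∏ j, ∫ x in A j, g j x := by
  rw [← integral_indicator (MeasurableSet.univ_pi hA)]
  simp_rw [pi_indicator_prod A g]
  rw [MeasureTheory.integral_fintype_prod_volume_eq_prod (f := fun j => (A j).indicator (g j))]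
  exact Finset.prod_congr rfl fun j _ => integral_indicator (hA j)

-- 1-d facts
lemma exp_neg_integrableOn_Ici {δ : ℝ} (hδ : 0 < δ) :
    IntegrableOn (fun x => Real.exp (-δ * x)) (Set.Ici (0:ℝ)) := by
  rw [integrableOn_Ici_iff_integrableOn_Ioi]
  exact exp_neg_integrableOn_Ioi 0 hδ

lemma integral_Ioi_exp_neg {δ : ℝ} (hδ : 0 < δ) :
    ∫ x in Set.Ioi (0:ℝ), Real.exp (-δ * x) = 1/δ := by
  have := MeasureTheory.integral_comp_mul_left_Ioi (fun x => Real.exp (-x)) 0 hδ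
  simp only [mul_zero] at this
  rw [show (fun x => Real.exp (-δ * x)) = (fun x => Real.exp (-(δ * x))) by funext x; ring_nf]
  rw [this, integral_exp_neg_Ioi_zero]
  simp [one_div]

lemma integral_Icc_exp_neg_le {δ c t : ℝ} (hδ : 0 < δ) (hc : 0 ≤ c) :
    ∫ x in Set.Icc 0 t, c * Real.exp (-δ * x) ≤ c / δ := by
  have hint : IntegrableOn (fun x => c * Real.exp (-δ * x)) (Set.Ici (0:ℝ)) :=
    (exp_neg_integrableOn_Ici hδ).const_mul c
  have h1 : ∫ x in Set.Icc 0 t, c * Real.exp (-δ * x) ≤ ∫ x in Set.Ici 0, c * Real.exp (-δ * x) := by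
    apply setIntegral_mono_set hint
    · filter_upwards with x
      positivity
    · exact HasSubset.Subset.eventuallyLE Set.Icc_subset_Ici_self
  calc _ ≤ _ := h1
    _ = c / δ := by
        rw [integral_Ici_eq_integral_Ioi, MeasureTheory.integral_const_mul, integral_Ioi_exp_neg hδ]
        ring

lemma max_lt_exp_bound {a b t : ℝ} (hb : max a 0 < b) (ht : 0 ≤ t) :
    (∫ s in (0:ℝ)..t, Real.exp (a * s)) ≤ (1/(b - max a 0)) * Real.exp (b * t) := by
  set m := max a 0 with hm
  have hm0 : 0 ≤ m := le_max_right a 0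
  have ham : a ≤ m := le_max_left a 0
  have h1 : (∫ s in (0:ℝ)..t, Real.exp (a * s)) ≤ ∫ s in (0:ℝ)..t, Real.exp (m * t) := by
    apply intervalIntegral.integral_mono_on ht
    · exact (Real.continuous_exp.comp (continuous_const.mul continuous_id)).intervalIntegrable 0 t
    · exact intervalIntegrable_const
    · intro x hx
      apply Real.exp_le_exp.2
      calc a * x ≤ m * x := mul_le_mul_of_nonneg_right ham hx.1
        _ ≤ m * t := mul_le_mul_of_nonneg_left hx.2 hm0
  have h2 : ∫ s in (0:ℝ)..t, Real.exp (m * t) = t * Real.exp (m * t) := by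
    simp [intervalIntegral.integral_const, smul_eq_mul]
  have h3 : t ≤ (1/(b - m)) * Real.exp ((b - m) * t) := by
    have hbm : 0 < b - m := by linarith [hb]
    have : (b - m) * t ≤ Real.exp ((b - m) * t) := by
      have := Real.add_one_le_exp ((b - m) * t)
      linarith
    rw [one_div, ← div_eq_inv_mul, le_div_iff₀ hbm]
    linarith [this]
  calc (∫ s in (0:ℝ)..t, Real.exp (a * s)) ≤ t * Real.exp (m * t) := h1.trans_eq h2
    _ ≤ (1/(b - m)) * Real.exp ((b - m) * t) * Real.exp (m * t) := by
        apply mul_le_mul_of_nonneg_right h3 (Real.exp_nonneg _)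
    _ = (1/(b - m)) * Real.exp (b * t) := by
        rw [mul_assoc, ← Real.exp_add]; ring_nf

lemma integrableOn_pi_prod {n : ℕ} (A : Fin n → Set ℝ) (hA : ∀ j, MeasurableSet (A j))
    (g : Fin n → ℝ → ℝ) (hg : ∀ j, IntegrableOn (g j) (A j)) :
    IntegrableOn (fun u => ∏ j, g j (u j)) (Set.univ.pi A) := by
  rw [← integrable_indicator_iff (MeasurableSet.univ_pi hA)]
  have := MeasureTheory.Integrable.fintype_prod (f := fun j => (A j).indicator (g j))
    (fun j => (integrable_indicator_iff (hA j)).2 (hg j))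
  rw [show (Set.univ.pi A).indicator (fun u => ∏ j, g j (u j)) = fun u => ∏ j, (A j).indicator (g j) (u j) from
    funext (pi_indicator_prod A g)]
  exact this

lemma volume_box_lt_top {n : ℕ} (t : Fin n → ℝ) : volume (box t) < ⊤ :=
  (isCompact_box t).measure_lt_top

/-- One term of the integration-by-parts expansion. -/
lemma ibp_term [CompleteSpace X] {n : ℕ} {f : (Fin n → ℝ) → X} (hf : LocInt f) (lam : Fin n → ℂ)
    (hlamne : ∀ j, lam j ≠ 0) (S : Finset (Fin n)) (t : Fin n → ℝ) (ht : ∀ j, 0 ≤ t j) :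
    ∫ s in box t, (∏ j ∈ S, (Complex.exp (-(lam j * (s j : ℂ))) - Complex.exp (-(lam j * (t j : ℂ))))) • f s
      = ∫ u in box (S.piecewise t fun _ => 1),
          (∏ j ∈ S, (lam j * Complex.exp (-(lam j * (u j : ℂ))))) • (∫ s in box (S.piecewise u t), f s) := by
  classical
  set c : Fin n → ℝ := S.piecewise t fun _ => 1 with hc
  have hc0 : ∀ j, 0 ≤ c j := by
    intro j
    by_cases h : j ∈ S
    · simpa [hc, Finset.piecewise_eq_of_mem _ _ _ h] using ht j
    · simp [hc, Finset.piecewise_eq_of_notMem _ _ _ h]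
  set k : (Fin n → ℝ) → (Fin n → ℝ) → ℂ := fun s u =>
    ∏ j ∈ S, ((if s j ≤ u j then (1:ℂ) else 0) * (lam j * Complex.exp (-(lam j * (u j : ℂ))))) with hk
  -- Step A : inner u-integral
  have stepA : ∀ s ∈ box t, (∫ u in box c, k s u)
      = ∏ j ∈ S, (Complex.exp (-(lam j * (s j : ℂ))) - Complex.exp (-(lam j * (t j : ℂ)))) := by
    intro s hs
    set g : Fin n → ℝ → ℂ := fun j x =>
      if j ∈ S then ((if s j ≤ x then (1:ℂ) else 0) * (lam j * Complex.exp (-(lam j * (x : ℂ))))) else 1 with hg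
    have hprod : ∀ u : Fin n → ℝ, k s u = ∏ j, g j (u j) := by
      intro u
      rw [hk]
      rw [← Finset.prod_subset (Finset.subset_univ S) (fun j _ hj => by simp [hg, hj])]
      exact Finset.prod_congr rfl fun j hj => by simp [hg, hj]
    have hbox : box c = Set.univ.pi fun j => Set.Icc 0 (c j) := rfl
    calc (∫ u in box c, k s u) = ∫ u in Set.univ.pi fun j => Set.Icc 0 (c j), ∏ j, g j (u j) := by
          rw [← hbox]
          exact setIntegral_congr_fun (measurableSet_box c) fun u _ => hprod u
      _ = ∏ j, ∫ x in Set.Icc 0 (c j), g j x := setIntegral_pi_prod _ (fun _ => measurableSet_Icc) g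
      _ = ∏ j ∈ S, (Complex.exp (-(lam j * (s j : ℂ))) - Complex.exp (-(lam j * (t j : ℂ)))) := by
          rw [← Finset.prod_subset (Finset.subset_univ S) (fun j _ hj => ?_)]
          · refine Finset.prod_congr rfl fun j hj => ?_
            -- j ∈ S : compute the 1-d integral
            have hcj : c j = t j := Finset.piecewise_eq_of_mem _ _ _ hj
            have hs0 : 0 ≤ s j := (mem_box.1 hs j).1
            have hst : s j ≤ t j := (mem_box.1 hs j).2
            have hgj : ∀ x : ℝ, g j x = (Set.Ici (s j)).indicator
                (fun x : ℝ => lam j * Complex.exp (-(lam j * (x : ℂ)))) x := by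
              intro x
              by_cases hx : s j ≤ x
              · simp [hg, hj, hx, Set.indicator_of_mem (Set.mem_Ici.2 hx)]
              · simp [hg, hj, hx, Set.indicator_of_notMem (fun h => hx (Set.mem_Ici.1 h))]
            rw [hcj]
            simp_rw [hgj]
            rw [MeasureTheory.setIntegral_indicator measurableSet_Ici]
            have hset : Set.Icc 0 (t j) ∩ Set.Ici (s j) = Set.Icc (s j) (t j) := by
              ext x
              simp only [Set.mem_inter_iff, Set.mem_Icc, Set.mem_Ici]
              constructor
              · rintro ⟨⟨_, h2⟩, h3⟩; exact ⟨h3, h2⟩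
              · rintro ⟨h1, h2⟩; exact ⟨⟨hs0.trans h1, h2⟩, h1⟩
            rw [hset, MeasureTheory.integral_Icc_eq_integral_Ioc,
              ← intervalIntegral.integral_of_le hst, intervalIntegral.integral_const_mul]
            have : ∀ x : ℝ, Complex.exp (-(lam j * (x:ℂ))) = Complex.exp ((-(lam j)) * (x:ℂ)) := by
              intro x; rw [neg_mul]
            simp_rw [this]
            rw [integral_exp_mul_complex (neg_ne_zero.2 (hlamne j))]
            rw [div_neg, mul_neg, mul_div_assoc', mul_div_cancel_left₀ _ (hlamne j), neg_sub]
          · -- j ∉ S : the factor is 1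
            have hcj : c j = 1 := Finset.piecewise_eq_of_notMem _ _ _ hj
            have : ∀ x : ℝ, g j x = 1 := fun x => by simp [hg, hj]
            simp_rw [this, hcj]
            simp [Real.volume_Icc]
  -- Step B : inner s-integral
  have stepB : ∀ u ∈ box c, (∫ s in box t, k s u • f s)
      = (∏ j ∈ S, (lam j * Complex.exp (-(lam j * (u j : ℂ))))) • (∫ s in box (S.piecewise u t), f s) := by
    intro u hu
    set P : ℂ := ∏ j ∈ S, (lam j * Complex.exp (-(lam j * (u j : ℂ)))) with hP
    set A : Set (Fin n → ℝ) := Set.pi ↑S (fun j => Set.Iic (u j)) with hA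
    have hAmeas : MeasurableSet A := MeasurableSet.pi S.countable_toSet (fun j _ => measurableSet_Iic)
    have hmemA : ∀ s : Fin n → ℝ, s ∈ A ↔ ∀ j ∈ S, s j ≤ u j := by
      intro s
      simp [hA, Set.mem_pi]
    have hkeq : ∀ s : Fin n → ℝ, k s u • f s = A.indicator (fun s => P • f s) s := by
      intro s
      rw [hk]
      simp only []
      rw [Finset.prod_mul_distrib, Finset.prod_boole]
      by_cases hmem : s ∈ A
      · rw [if_pos ((hmemA s).1 hmem), one_mul, Set.indicator_of_mem hmem]
      · rw [if_neg (fun h => hmem ((hmemA s).2 h)), zero_mul, zero_smul,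
          Set.indicator_of_notMem hmem]
    have hsetBA : box t ∩ A = box (S.piecewise u t) := by
      ext s
      simp only [Set.mem_inter_iff, mem_box, hmemA]
      constructor
      · rintro ⟨h1, h2⟩ j
        by_cases hj : j ∈ S
        · rw [Finset.piecewise_eq_of_mem _ _ _ hj]
          exact ⟨(h1 j).1, h2 j hj⟩
        · rw [Finset.piecewise_eq_of_notMem _ _ _ hj]
          exact h1 j
      · intro h
        constructor
        · intro j
          by_cases hj : j ∈ S
          · refine ⟨(h j).1, ?_⟩
            have h2 := (h j).2
            rw [Finset.piecewise_eq_of_mem _ _ _ hj] at h2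
            have hut : u j ≤ t j := by
              have := (mem_box.1 hu j).2
              rwa [show c j = t j from Finset.piecewise_eq_of_mem _ _ _ hj] at this
            exact h2.trans hut
          · have h2 := (h j).2
            rw [Finset.piecewise_eq_of_notMem _ _ _ hj] at h2
            exact ⟨(h j).1, h2⟩
        · intro j hj
          have h2 := (h j).2
          rwa [Finset.piecewise_eq_of_mem _ _ _ hj] at h2
    calc (∫ s in box t, k s u • f s) = ∫ s in box t, A.indicator (fun s => P • f s) s :=
          integral_congr_ae (Filter.Eventually.of_forall fun s => hkeq s)
      _ = ∫ s in box t ∩ A, P • f s := MeasureTheory.setIntegral_indicator hAmeas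
      _ = P • ∫ s in box (S.piecewise u t), f s := by rw [hsetBA, integral_smul]
  -- Step C : Fubini
  set K : ℝ := ∏ j ∈ S, (‖lam j‖ * Real.exp (|(lam j).re| * c j)) with hK
  have hae_mem : ∀ᵐ p ∂((volume.restrict (box t)).prod (volume.restrict (box c))),
      p ∈ (box t) ×ˢ (box c) := by
    rw [MeasureTheory.Measure.prod_restrict]
    exact ae_restrict_mem ((measurableSet_box t).prod (measurableSet_box c))
  have hknorm : ∀ s : Fin n → ℝ, ∀ u ∈ box c, ‖k s u‖ ≤ K := by
    intro s u hu
    rw [hk, hK]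
    simp only []
    rw [norm_prod]
    apply Finset.prod_le_prod (fun j _ => norm_nonneg _)
    intro j hj
    rw [norm_mul, norm_mul, Complex.norm_exp]
    have h1 : ‖(if s j ≤ u j then (1:ℂ) else 0)‖ ≤ 1 := by
      split <;> simp
    have h2 : (-(lam j * ((u j : ℝ) : ℂ))).re ≤ |(lam j).re| * c j := by
      have : (-(lam j * ((u j : ℝ) : ℂ))).re = -((lam j).re * u j) := by
        simp [Complex.mul_re]
      rw [this, neg_mul_eq_neg_mul]
      have hu1 : 0 ≤ u j := (mem_box.1 hu j).1
      have hu2 : u j ≤ c j := (mem_box.1 hu j).2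
      calc -(lam j).re * u j ≤ |(lam j).re| * u j :=
            mul_le_mul_of_nonneg_right (neg_le_abs _) hu1
        _ ≤ |(lam j).re| * c j := mul_le_mul_of_nonneg_left hu2 (abs_nonneg _)
    calc ‖(if s j ≤ u j then (1:ℂ) else 0)‖ * (‖lam j‖ * Real.exp (-(lam j * ((u j : ℝ) : ℂ))).re)
        ≤ 1 * (‖lam j‖ * Real.exp (|(lam j).re| * c j)) := by
          apply mul_le_mul h1 _ (by positivity) zero_le_one
          exact mul_le_mul_of_nonneg_left (Real.exp_le_exp.2 h2) (norm_nonneg _)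
      _ = ‖lam j‖ * Real.exp (|(lam j).re| * c j) := one_mul _
  have hint : Integrable (Function.uncurry fun s u => k s u • f s)
      ((volume.restrict (box t)).prod (volume.restrict (box c))) := by
    have hkmeas : Measurable (fun p : (Fin n → ℝ) × (Fin n → ℝ) => k p.1 p.2) := by
      rw [hk]
      apply Finset.measurable_prod
      intro j _
      apply Measurable.mul
      · exact Measurable.ite (measurableSet_le (measurable_fst.eval) (measurable_snd.eval))
          measurable_const measurable_const
      · apply Measurable.const_mul
        exact (Complex.continuous_exp.comp (Continuous.neg (continuous_const.mul
          (Complex.continuous_ofReal.comp ((continuous_apply j).comp continuous_snd))))).measurable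
    apply MeasureTheory.Integrable.mono' (g := fun p => K * ‖f p.1‖)
    · have h1 : Integrable (fun s => K * ‖f s‖) (volume.restrict (box t)) := (hf t).norm.const_mul K
      have h2 : Integrable (fun _ : Fin n → ℝ => (1:ℝ)) (volume.restrict (box c)) := by
        rw [MeasureTheory.integrable_const_iff]
        right
        exact ⟨by rw [Measure.restrict_apply_univ]; exact volume_box_lt_top c⟩
      have := h1.mul_prod h2
      simpa using this
    · exact (hkmeas.aestronglyMeasurable).smul ((hf t).aestronglyMeasurable.comp_fst)
    · filter_upwards [hae_mem] with p hp
      show ‖k p.1 p.2 • f p.1‖ ≤ K * ‖f p.1‖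
      rw [norm_smul]
      exact mul_le_mul_of_nonneg_right (hknorm p.1 p.2 hp.2) (norm_nonneg _)
  have hswap := MeasureTheory.integral_integral_swap hint
  calc ∫ s in box t, (∏ j ∈ S, (Complex.exp (-(lam j * (s j : ℂ))) - Complex.exp (-(lam j * (t j : ℂ))))) • f s
      = ∫ s in box t, (∫ u in box c, k s u) • f s :=
        (setIntegral_congr_fun (measurableSet_box t) fun s hs => by rw [stepA s hs]).symm
    _ = ∫ s in box t, ∫ u in box c, k s u • f s :=
        integral_congr_ae (Filter.Eventually.of_forall fun s => (integral_smul_const _ _).symm)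
    _ = ∫ u in box c, ∫ s in box t, k s u • f s := hswap
    _ = ∫ u in box c, (∏ j ∈ S, (lam j * Complex.exp (-(lam j * (u j : ℂ))))) • (∫ s in box (S.piecewise u t), f s) :=
        setIntegral_congr_fun (measurableSet_box c) fun u hu => stepB u hu

/-- The truncated Laplace integral of `f` expands as a `2ⁿ`-term sum involving `G`. -/
lemma trunc_eq_sum [CompleteSpace X] {n : ℕ} {f : (Fin n → ℝ) → X} (hf : LocInt f)
    (lam : Fin n → ℂ) (hlamne : ∀ j, lam j ≠ 0) (t : Fin n → ℝ) (ht : ∀ j, 0 ≤ t j) :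
    (∫ s in box t, Complex.exp (-(∑ j, lam j * (s j : ℂ))) • f s)
      = ∑ S : Finset (Fin n), (∏ j ∈ Sᶜ, Complex.exp (-(lam j * (t j : ℂ)))) •
          (∫ u in box (S.piecewise t fun _ => 1),
            (∏ j ∈ S, (lam j * Complex.exp (-(lam j * (u j : ℂ))))) •
              (∫ s in box (S.piecewise u t), f s)) := by
  classical
  have hexp : ∀ s : Fin n → ℝ, Complex.exp (-(∑ j, lam j * (s j : ℂ)))
      = ∑ S : Finset (Fin n),
          (∏ j ∈ S, (Complex.exp (-(lam j * (s j : ℂ))) - Complex.exp (-(lam j * (t j : ℂ)))))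
            * ∏ j ∈ Sᶜ, Complex.exp (-(lam j * (t j : ℂ))) := by
    intro s
    rw [show -(∑ j, lam j * (s j : ℂ)) = ∑ j, -(lam j * (s j : ℂ)) by
      rw [Finset.sum_neg_distrib], Complex.exp_sum]
    rw [show (∏ j, Complex.exp (-(lam j * (s j : ℂ))))
        = ∏ j, ((Complex.exp (-(lam j * (s j : ℂ))) - Complex.exp (-(lam j * (t j : ℂ))))
            + Complex.exp (-(lam j * (t j : ℂ)))) by
      exact Finset.prod_congr rfl fun j _ => by ring]
    exact Fintype.prod_add _ _
  have hintS : ∀ S : Finset (Fin n), Integrable (fun s =>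
      (∏ j ∈ S, (Complex.exp (-(lam j * (s j : ℂ))) - Complex.exp (-(lam j * (t j : ℂ))))) • f s)
      (volume.restrict (box t)) := by
    intro S
    set K : ℝ := ∏ j ∈ S, (2 * Real.exp (|(lam j).re| * t j)) with hKdef
    apply MeasureTheory.Integrable.mono' (g := fun s => K * ‖f s‖) ((hf t).norm.const_mul K)
    · apply AEStronglyMeasurable.smul _ (hf t).aestronglyMeasurable
      apply Continuous.aestronglyMeasurable
      apply continuous_finset_prod
      intro j _
      apply Continuous.sub _ continuous_const
      exact Complex.continuous_exp.comp (Continuous.neg (continuous_const.mul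
        (Complex.continuous_ofReal.comp (continuous_apply j))))
    · filter_upwards [ae_restrict_mem (measurableSet_box t)] with s hs
      rw [norm_smul]
      apply mul_le_mul_of_nonneg_right _ (norm_nonneg _)
      rw [norm_prod, hKdef]
      apply Finset.prod_le_prod (fun j _ => norm_nonneg _)
      intro j _
      have hb : ∀ x : ℝ, 0 ≤ x → x ≤ t j → ‖Complex.exp (-(lam j * (x : ℂ)))‖
          ≤ Real.exp (|(lam j).re| * t j) := by
        intro x hx0 hxt
        rw [Complex.norm_exp]
        apply Real.exp_le_exp.2
        have : (-(lam j * (x : ℂ))).re = -((lam j).re * x) := by simp [Complex.mul_re]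
        rw [this, neg_mul_eq_neg_mul]
        calc -(lam j).re * x ≤ |(lam j).re| * x := mul_le_mul_of_nonneg_right (neg_le_abs _) hx0
          _ ≤ |(lam j).re| * t j := mul_le_mul_of_nonneg_left hxt (abs_nonneg _)
      calc ‖Complex.exp (-(lam j * (s j : ℂ))) - Complex.exp (-(lam j * (t j : ℂ)))‖
          ≤ ‖Complex.exp (-(lam j * (s j : ℂ)))‖ + ‖Complex.exp (-(lam j * (t j : ℂ)))‖ :=
            norm_sub_le _ _
        _ ≤ Real.exp (|(lam j).re| * t j) + Real.exp (|(lam j).re| * t j) := by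
            have h1 := hb (s j) (mem_box.1 hs j).1 (mem_box.1 hs j).2
            have h2 := hb (t j) (ht j) le_rfl
            exact add_le_add h1 h2
        _ = 2 * Real.exp (|(lam j).re| * t j) := by ring
  calc (∫ s in box t, Complex.exp (-(∑ j, lam j * (s j : ℂ))) • f s)
      = ∫ s in box t, ∑ S : Finset (Fin n), (∏ j ∈ Sᶜ, Complex.exp (-(lam j * (t j : ℂ)))) •
          ((∏ j ∈ S, (Complex.exp (-(lam j * (s j : ℂ))) - Complex.exp (-(lam j * (t j : ℂ))))) • f s) := by
        apply integral_congr_ae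
        filter_upwards with s
        rw [hexp s, Finset.sum_smul]
        exact Finset.sum_congr rfl fun S _ => by rw [smul_smul, mul_comm]
    _ = ∑ S : Finset (Fin n), ∫ s in box t, (∏ j ∈ Sᶜ, Complex.exp (-(lam j * (t j : ℂ)))) •
          ((∏ j ∈ S, (Complex.exp (-(lam j * (s j : ℂ))) - Complex.exp (-(lam j * (t j : ℂ))))) • f s) :=
        integral_finset_sum _ fun S _ => ((hintS S).smul (∏ j ∈ Sᶜ, Complex.exp (-(lam j * (t j : ℂ)))))
    _ = ∑ S : Finset (Fin n), (∏ j ∈ Sᶜ, Complex.exp (-(lam j * (t j : ℂ)))) •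
          (∫ u in box (S.piecewise t fun _ => 1),
            (∏ j ∈ S, (lam j * Complex.exp (-(lam j * (u j : ℂ))))) •
              (∫ s in box (S.piecewise u t), f s)) := by
        refine Finset.sum_congr rfl fun S _ => ?_
        rw [integral_smul, ibp_term hf lam hlamne S t ht]

lemma continuous_piecewise_left {n : ℕ} (S : Finset (Fin n)) (t : Fin n → ℝ) :
    Continuous fun u : Fin n → ℝ => S.piecewise u t := by
  classical
  apply continuous_pi
  intro j
  by_cases hj : j ∈ S
  · have : (fun u : Fin n → ℝ => S.piecewise u t j) = fun u => u j :=
      funext fun u => Finset.piecewise_eq_of_mem _ _ _ hj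
    rw [this]; exact continuous_apply j
  · have : (fun u : Fin n → ℝ => S.piecewise u t j) = fun _ => t j :=
      funext fun u => Finset.piecewise_eq_of_notMem _ _ _ hj
    rw [this]; exact continuous_const

lemma norm_cexp_neg_mul (z : ℂ) (x : ℝ) :
    ‖Complex.exp (-(z * (x : ℂ)))‖ = Real.exp (-(z.re * x)) := by
  rw [Complex.norm_exp]
  congr 1
  simp [Complex.mul_re]

lemma continuous_antider {n : ℕ} {f : (Fin n → ℝ) → X} (hf : LocInt f) :
    Continuous (fun t => ∫ s in box t, f s) := by
  rw [continuous_iff_continuousAt]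
  intro t₀
  set R : Fin n → ℝ := fun j => |t₀ j| + 1 with hR
  -- eventually box t ⊆ box R
  have hev : ∀ᶠ t : Fin n → ℝ in nhds t₀, ∀ j, |t j - t₀ j| < 1 := by
    rw [eventually_all]
    intro j
    have hc : Continuous (fun t : Fin n → ℝ => |t j - t₀ j|) :=
      ((continuous_apply j).sub continuous_const).abs
    have : IsOpen {t : Fin n → ℝ | |t j - t₀ j| < 1} := isOpen_lt hc continuous_const
    exact this.eventually_mem (by simp)
  have hsub : ∀ ⦃t : Fin n → ℝ⦄, (∀ j, |t j - t₀ j| < 1) → box t ⊆ box R := by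
    intro t ht s hs
    rw [mem_box] at hs ⊢
    intro j
    refine ⟨(hs j).1, (hs j).2.trans ?_⟩
    have h1 := (abs_lt.1 (ht j)).2
    have h2 := le_abs_self (t₀ j)
    simp only [hR]
    linarith
  -- the auxiliary function
  have key : Filter.Tendsto (fun t : Fin n → ℝ => ∫ s in box R, (box t).indicator f s)
      (nhds t₀) (nhds (∫ s in box R, (box t₀).indicator f s)) := by
    apply MeasureTheory.tendsto_integral_filter_of_dominated_convergence (fun s => ‖f s‖)
    · filter_upwards with t
      exact ((hf R).aestronglyMeasurable.indicator (measurableSet_box t))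
    · filter_upwards with t
      filter_upwards with s
      exact norm_indicator_le_norm_self f s
    · exact (hf R).norm
    · -- a.e. convergence
      have hae : ∀ᵐ s : Fin n → ℝ, ∀ j, s j ≠ t₀ j := by
        rw [MeasureTheory.ae_all_iff]
        intro j
        rw [MeasureTheory.ae_iff]
        have : {s : Fin n → ℝ | ¬ s j ≠ t₀ j} = {s | s j = t₀ j} := by ext s; simp
        rw [this, MeasureTheory.volume_pi]
        exact MeasureTheory.Measure.pi_hyperplane (fun _ => (volume : Measure ℝ)) j (t₀ j)
      apply MeasureTheory.ae_restrict_of_ae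
      filter_upwards [hae] with s hs
      by_cases hmem : s ∈ box t₀
      · have hevmem : ∀ᶠ t : Fin n → ℝ in nhds t₀, s ∈ box t := by
          rw [show (∀ᶠ t : Fin n → ℝ in nhds t₀, s ∈ box t) ↔
            ∀ᶠ t : Fin n → ℝ in nhds t₀, ∀ j, 0 ≤ s j ∧ s j ≤ t j by
              simp only [mem_box]]
          rw [eventually_all]
          intro j
          have h1 : s j < t₀ j := lt_of_le_of_ne (mem_box.1 hmem j).2 (hs j)
          have : IsOpen {t : Fin n → ℝ | 0 ≤ s j ∧ s j < t j} := by
            simp only [setOf_and]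
            exact (isOpen_const (p := 0 ≤ s j)).inter (isOpen_lt continuous_const (continuous_apply j))
          filter_upwards [this.eventually_mem (by exact ⟨(mem_box.1 hmem j).1, h1⟩)] with t ht
          exact ⟨ht.1, le_of_lt ht.2⟩
        rw [Set.indicator_of_mem hmem]
        apply Filter.Tendsto.congr' _ tendsto_const_nhds
        filter_upwards [hevmem] with t ht
        rw [Set.indicator_of_mem ht]
      · rw [Set.indicator_of_notMem hmem]
        rw [mem_box] at hmem
        push_neg at hmem
        obtain ⟨j, hj⟩ := hmem
        by_cases h0 : 0 ≤ s j
        · have hjt : t₀ j < s j := hj h0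
          have hevnot : ∀ᶠ t : Fin n → ℝ in nhds t₀, s ∉ box t := by
            have : IsOpen {t : Fin n → ℝ | t j < s j} := isOpen_lt (continuous_apply j) continuous_const
            filter_upwards [this.eventually_mem (by exact hjt)] with t ht hmem'
            exact absurd (mem_box.1 hmem' j).2 (not_le.2 ht)
          apply Filter.Tendsto.congr' _ tendsto_const_nhds
          filter_upwards [hevnot] with t ht
          rw [Set.indicator_of_notMem ht]
        · have hevnot : ∀ t : Fin n → ℝ, s ∉ box t := by
            intro t hmem'
            exact h0 (mem_box.1 hmem' j).1
          apply Filter.Tendsto.congr' _ tendsto_const_nhds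
          filter_upwards with t
          rw [Set.indicator_of_notMem (hevnot t)]
  -- now conclude
  have heq : (fun t : Fin n → ℝ => ∫ s in box R, (box t).indicator f s) =ᶠ[nhds t₀]
      (fun t => ∫ s in box t, f s) := by
    filter_upwards [hev] with t ht
    rw [MeasureTheory.setIntegral_indicator (measurableSet_box t),
      Set.inter_eq_right.2 (hsub ht)]
  have heq0 : (∫ s in box R, (box t₀).indicator f s) = ∫ s in box t₀, f s := by
    rw [MeasureTheory.setIntegral_indicator (measurableSet_box t₀),
      Set.inter_eq_right.2 (hsub (fun j => by simp))]
  rw [ContinuousAt]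
  exact Filter.Tendsto.congr' heq (heq0 ▸ key)

/-- Bound for one term of the expansion. -/
lemma term_bound {n : ℕ} {f : (Fin n → ℝ) → X} (hf : LocInt f) {lam : Fin n → ℂ}
    {b : Fin n → ℝ} {M' : ℝ} (hM' : 0 ≤ M') (hbl : ∀ j, b j < (lam j).re)
    (hGb : ∀ r : Fin n → ℝ, (∀ j, 0 ≤ r j) → ‖∫ s in box r, f s‖ ≤ M' * ∏ j, Real.exp (b j * r j))
    (S : Finset (Fin n)) (t : Fin n → ℝ) (ht : ∀ j, 0 ≤ t j) :
    ‖∫ u in box (S.piecewise t fun _ => 1),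
        (∏ j ∈ S, (lam j * Complex.exp (-(lam j * (u j : ℂ))))) • (∫ s in box (S.piecewise u t), f s)‖
      ≤ (M' * ∏ j, max 1 (‖lam j‖ / ((lam j).re - b j))) * ∏ j ∈ Sᶜ, Real.exp (b j * t j) := by
  classical
  set c : Fin n → ℝ := S.piecewise t fun _ => 1 with hc
  set φ : Fin n → ℝ → ℝ := fun j x =>
    if j ∈ S then ‖lam j‖ * Real.exp ((b j - (lam j).re) * x) else 1 with hφ
  set Cpre : ℝ := M' * ∏ j ∈ Sᶜ, Real.exp (b j * t j) with hCpre
  have hCpre0 : 0 ≤ Cpre := by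
    apply mul_nonneg hM'
    exact Finset.prod_nonneg fun j _ => Real.exp_nonneg _
  have hGcont : Continuous fun r : Fin n → ℝ => ∫ s in box r, f s := continuous_antider hf
  have hφ0 : ∀ j x, 0 ≤ φ j x := by
    intro j x
    rw [hφ]
    by_cases hj : j ∈ S <;> simp [hj] <;> positivity
  have hpcw0 : ∀ u ∈ box c, ∀ j, 0 ≤ S.piecewise u t j := by
    intro u hu j
    by_cases hj : j ∈ S
    · rw [Finset.piecewise_eq_of_mem _ _ _ hj]; exact (mem_box.1 hu j).1
    · rw [Finset.piecewise_eq_of_notMem _ _ _ hj]; exact ht j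
  have hφsplit : ∀ u : Fin n → ℝ,
      (∏ j, φ j (u j)) = ∏ j ∈ S, (‖lam j‖ * Real.exp ((b j - (lam j).re) * u j)) := by
    intro u
    rw [← Finset.prod_subset (Finset.subset_univ S) (fun j _ hj => by simp [hφ, hj])]
    exact Finset.prod_congr rfl fun j hj => by simp [hφ, hj]
  -- pointwise bound
  have hpt : ∀ u ∈ box c,
      ‖(∏ j ∈ S, (lam j * Complex.exp (-(lam j * (u j : ℂ))))) • (∫ s in box (S.piecewise u t), f s)‖
        ≤ Cpre * ∏ j, φ j (u j) := by
    intro u hu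
    rw [norm_smul, norm_prod]
    have hGle := hGb (S.piecewise u t) (hpcw0 u hu)
    have hsplit : (∏ j, Real.exp (b j * S.piecewise u t j))
        = (∏ j ∈ S, Real.exp (b j * u j)) * ∏ j ∈ Sᶜ, Real.exp (b j * t j) := by
      rw [← Finset.prod_mul_prod_compl S fun j => Real.exp (b j * S.piecewise u t j)]
      congr 1
      · exact Finset.prod_congr rfl fun j hj => by rw [Finset.piecewise_eq_of_mem _ _ _ hj]
      · exact Finset.prod_congr rfl fun j hj => by
          rw [Finset.piecewise_eq_of_notMem _ _ _ (Finset.mem_compl.1 hj)]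
    have e1 : (∏ j ∈ S, ‖lam j * Complex.exp (-(lam j * (u j : ℂ)))‖)
        = ∏ j ∈ S, (‖lam j‖ * Real.exp (-((lam j).re * u j))) :=
      Finset.prod_congr rfl fun j _ => by rw [norm_mul, norm_cexp_neg_mul]
    rw [e1]
    calc (∏ j ∈ S, (‖lam j‖ * Real.exp (-((lam j).re * u j)))) * ‖∫ s in box (S.piecewise u t), f s‖
        ≤ (∏ j ∈ S, (‖lam j‖ * Real.exp (-((lam j).re * u j)))) *
            (M' * ∏ j, Real.exp (b j * S.piecewise u t j)) :=
          mul_le_mul_of_nonneg_left hGle (Finset.prod_nonneg fun j _ => by positivity)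
      _ = Cpre * ∏ j, φ j (u j) := by
          rw [hsplit, hφsplit u, hCpre]
          have : ∏ j ∈ S, (‖lam j‖ * Real.exp ((b j - (lam j).re) * u j))
              = ∏ j ∈ S, ((‖lam j‖ * Real.exp (-((lam j).re * u j))) * Real.exp (b j * u j)) :=
            Finset.prod_congr rfl fun j _ => by
              rw [mul_assoc, ← Real.exp_add]
              congr 2
              ring
          rw [this]
          simp only [Finset.prod_mul_distrib]
          ring
  -- integrability
  have hcont1 : Continuous fun u : Fin n → ℝ =>
      (∏ j ∈ S, (lam j * Complex.exp (-(lam j * (u j : ℂ))))) • (∫ s in box (S.piecewise u t), f s) := by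
    apply Continuous.smul
    · apply continuous_finset_prod
      intro j _
      exact continuous_const.mul (Complex.continuous_exp.comp (Continuous.neg
        (continuous_const.mul (Complex.continuous_ofReal.comp (continuous_apply j)))))
    · exact hGcont.comp (continuous_piecewise_left S t)
  have hcont2 : Continuous fun u : Fin n → ℝ => Cpre * ∏ j, φ j (u j) := by
    apply continuous_const.mul
    apply continuous_finset_prod
    intro j _
    rw [hφ]
    by_cases hj : j ∈ S
    · simp only [hj, if_true]
      exact continuous_const.mul (Real.continuous_exp.comp (continuous_const.mul (continuous_apply j)))
    · simp only [hj, if_false]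
      exact continuous_const
  have hInt1 : IntegrableOn (fun u : Fin n → ℝ =>
      ‖(∏ j ∈ S, (lam j * Complex.exp (-(lam j * (u j : ℂ))))) • (∫ s in box (S.piecewise u t), f s)‖)
      (box c) := hcont1.norm.continuousOn.integrableOn_compact (isCompact_box c)
  have hInt2 : IntegrableOn (fun u : Fin n → ℝ => Cpre * ∏ j, φ j (u j)) (box c) :=
    hcont2.continuousOn.integrableOn_compact (isCompact_box c)
  -- compute the integral of the dominating function
  have hval : ∫ u in box c, (Cpre * ∏ j, φ j (u j)) = Cpre * ∏ j, ∫ x in Set.Icc 0 (c j), φ j x := by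
    rw [MeasureTheory.integral_const_mul]
    congr 1
    exact setIntegral_pi_prod _ (fun _ => measurableSet_Icc) φ
  have hfac : ∀ j, (∫ x in Set.Icc 0 (c j), φ j x) ≤ max 1 (‖lam j‖ / ((lam j).re - b j)) := by
    intro j
    by_cases hj : j ∈ S
    · have hδ : 0 < (lam j).re - b j := by linarith [hbl j]
      have : ∀ x : ℝ, φ j x = ‖lam j‖ * Real.exp (-((lam j).re - b j) * x) := by
        intro x
        rw [hφ]
        simp only [hj, if_true]
        congr 2
        ring
      simp_rw [this]
      exact (integral_Icc_exp_neg_le hδ (norm_nonneg _)).trans (le_max_right _ _)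
    · have hc1 : c j = 1 := Finset.piecewise_eq_of_notMem _ _ _ hj
      have : ∀ x : ℝ, φ j x = 1 := fun x => by simp [hφ, hj]
      simp_rw [this, hc1]
      rw [MeasureTheory.setIntegral_const]
      simp [Real.volume_Icc]
  have hfac0 : ∀ j, 0 ≤ ∫ x in Set.Icc 0 (c j), φ j x := fun j =>
    MeasureTheory.setIntegral_nonneg measurableSet_Icc fun x _ => hφ0 j x
  -- put it together
  calc ‖∫ u in box c,
        (∏ j ∈ S, (lam j * Complex.exp (-(lam j * (u j : ℂ))))) • (∫ s in box (S.piecewise u t), f s)‖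
      ≤ ∫ u in box c, ‖(∏ j ∈ S, (lam j * Complex.exp (-(lam j * (u j : ℂ))))) •
          (∫ s in box (S.piecewise u t), f s)‖ := norm_integral_le_integral_norm _
    _ ≤ ∫ u in box c, (Cpre * ∏ j, φ j (u j)) := by
        apply MeasureTheory.setIntegral_mono_on hInt1 hInt2 (measurableSet_box c)
        intro u hu
        exact hpt u hu
    _ = Cpre * ∏ j, ∫ x in Set.Icc 0 (c j), φ j x := hval
    _ ≤ Cpre * ∏ j, max 1 (‖lam j‖ / ((lam j).re - b j)) := by
        apply mul_le_mul_of_nonneg_left _ hCpre0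
        exact Finset.prod_le_prod (fun j _ => hfac0 j) (fun j _ => hfac j)
    _ = (M' * ∏ j, max 1 (‖lam j‖ / ((lam j).re - b j))) * ∏ j ∈ Sᶜ, Real.exp (b j * t j) := by
        rw [hCpre]; ring

lemma orthant_eq2 {n : ℕ} : orthant n = Set.univ.pi fun _ : Fin n => Set.Ici (0:ℝ) := by
  ext s; simp only [orthant, Set.mem_univ_pi, Set.mem_Ici, Set.mem_setOf_eq]

lemma box_subset_orthant2 {n : ℕ} (t : Fin n → ℝ) : box t ⊆ orthant n :=
  fun s hs j => (mem_box.1 hs j).1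

lemma measurableSet_orthant2 {n : ℕ} : MeasurableSet (orthant n) := by
  rw [orthant_eq2]; exact MeasurableSet.univ_pi fun _ => measurableSet_Ici

/-- From the `2ⁿ`-term hypothesis to a clean exponential bound on `G`. -/
lemma Gexp_bound {n : ℕ} {f : (Fin n → ℝ) → X} {lam0 : Fin n → ℂ} {M : ℝ} (hM : 0 < M)
    (hG : ∀ t : Fin n → ℝ, (∀ j, 0 ≤ t j) →
      ‖∫ s in box t, f s‖ ≤ M * ∑ S : Finset (Fin n),
        (∏ j ∈ S, Real.exp ((lam0 j).re * t j)) *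
          ∏ j ∈ Sᶜ, ∫ s in (0:ℝ)..(t j), Real.exp ((lam0 j).re * s))
    {b : Fin n → ℝ} (hb : ∀ j, max ((lam0 j).re) 0 < b j) :
    ∃ M' : ℝ, 0 < M' ∧ ∀ t : Fin n → ℝ, (∀ j, 0 ≤ t j) →
      ‖∫ s in box t, f s‖ ≤ M' * ∏ j, Real.exp (b j * t j) := by
  classical
  set C : Fin n → ℝ := fun j => max 1 (1/(b j - max ((lam0 j).re) 0)) with hC
  have hC1 : ∀ j, 1 ≤ C j := fun j => le_max_left _ _
  have hC0 : ∀ j, 0 < C j := fun j => lt_of_lt_of_le one_pos (hC1 j)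
  have hCprod : 0 < ∏ j, C j := Finset.prod_pos fun j _ => hC0 j
  refine ⟨M * 2^n * ∏ j, C j, by positivity, ?_⟩
  intro t ht
  refine (hG t ht).trans ?_
  have key : ∀ S : Finset (Fin n),
      (∏ j ∈ S, Real.exp ((lam0 j).re * t j)) *
          (∏ j ∈ Sᶜ, ∫ s in (0:ℝ)..(t j), Real.exp ((lam0 j).re * s))
        ≤ ∏ j, (C j * Real.exp (b j * t j)) := by
    intro S
    set h : Fin n → ℝ := fun j => if j ∈ S then Real.exp ((lam0 j).re * t j)
      else ∫ s in (0:ℝ)..(t j), Real.exp ((lam0 j).re * s) with hh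
    have e1 : (∏ j ∈ S, Real.exp ((lam0 j).re * t j)) *
        (∏ j ∈ Sᶜ, ∫ s in (0:ℝ)..(t j), Real.exp ((lam0 j).re * s)) = ∏ j, h j := by
      rw [← Finset.prod_mul_prod_compl S h]
      congr 1
      · exact Finset.prod_congr rfl fun j hj => by simp [hh, hj]
      · exact Finset.prod_congr rfl fun j hj => by simp [hh, Finset.mem_compl.1 hj]
    rw [e1]
    apply Finset.prod_le_prod
    · intro j _
      rw [hh]
      by_cases hj : j ∈ S
      · simp only [hj, if_true]; positivity
      · simp only [hj, if_false]
        exact intervalIntegral.integral_nonneg (ht j) (fun x _ => Real.exp_nonneg _)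
    · intro j _
      rw [hh]
      by_cases hj : j ∈ S
      · simp only [hj, if_true]
        have h1 : (lam0 j).re * t j ≤ b j * t j :=
          mul_le_mul_of_nonneg_right ((le_max_left _ _).trans (hb j).le) (ht j)
        calc Real.exp ((lam0 j).re * t j) ≤ Real.exp (b j * t j) := Real.exp_le_exp.2 h1
          _ ≤ C j * Real.exp (b j * t j) := le_mul_of_one_le_left (Real.exp_nonneg _) (hC1 j)
      · simp only [hj, if_false]
        calc (∫ s in (0:ℝ)..(t j), Real.exp ((lam0 j).re * s))
            ≤ (1/(b j - max ((lam0 j).re) 0)) * Real.exp (b j * t j) :=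
              max_lt_exp_bound (hb j) (ht j)
          _ ≤ C j * Real.exp (b j * t j) :=
              mul_le_mul_of_nonneg_right (le_max_right _ _) (Real.exp_nonneg _)
  calc M * ∑ S : Finset (Fin n), (∏ j ∈ S, Real.exp ((lam0 j).re * t j)) *
          ∏ j ∈ Sᶜ, ∫ s in (0:ℝ)..(t j), Real.exp ((lam0 j).re * s)
      ≤ M * ∑ _S : Finset (Fin n), ∏ j, (C j * Real.exp (b j * t j)) :=
        mul_le_mul_of_nonneg_left (Finset.sum_le_sum fun S _ => key S) hM.le
    _ = M * (2^n * ∏ j, (C j * Real.exp (b j * t j))) := by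
        rw [Finset.sum_const, Finset.card_univ, Fintype.card_finset, Fintype.card_fin,
          nsmul_eq_mul]
        push_cast
        ring
    _ = (M * 2^n * ∏ j, C j) * ∏ j, Real.exp (b j * t j) := by
        rw [Finset.prod_mul_distrib]
        ring

/-- Tail of an integrable function on the orthant is small. -/
lemma tail_small {n : ℕ} {h : (Fin n → ℝ) → X} (hInt : IntegrableOn h (orthant n)) :
    ∀ ε > 0, ∃ k : ℕ, ∀ t : Fin n → ℝ, (∀ j, (k:ℝ) ≤ t j) →
      ‖(∫ u in box t, h u) - ∫ u in orthant n, h u‖ < ε := by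
  have hmono : Monotone (fun k : ℕ => box (fun _ : Fin n => (k:ℝ))) := by
    intro k1 k2 hk s hs
    rw [mem_box] at hs ⊢
    intro j
    exact ⟨(hs j).1, (hs j).2.trans (by exact_mod_cast hk)⟩
  have hunion : ⋃ k : ℕ, box (fun _ : Fin n => (k:ℝ)) = orthant n := by
    apply Set.Subset.antisymm
    · exact Set.iUnion_subset fun k => box_subset_orthant2 _
    · intro s hs
      refine Set.mem_iUnion.2 ⟨Finset.univ.sup (fun j => Nat.ceil (s j)), mem_box.2 fun j => ?_⟩
      refine ⟨hs j, (Nat.le_ceil _).trans ?_⟩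
      exact Nat.cast_le.2 (Finset.le_sup (f := fun j => Nat.ceil (s j)) (Finset.mem_univ j))
  have hnorm : IntegrableOn (fun u => ‖h u‖) (orthant n) := hInt.norm
  have htend := MeasureTheory.tendsto_setIntegral_of_monotone
    (fun k : ℕ => measurableSet_box _) hmono (hunion ▸ hnorm)
  rw [hunion] at htend
  intro ε hε
  obtain ⟨N, hN⟩ := Metric.tendsto_atTop.1 htend ε hε
  refine ⟨N, fun t htk => ?_⟩
  have hsub1 : box (fun _ : Fin n => (N:ℝ)) ⊆ box t := by
    intro s hs
    rw [mem_box] at hs ⊢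
    exact fun j => ⟨(hs j).1, (hs j).2.trans (htk j)⟩
  have hsub2 : box t ⊆ orthant n := box_subset_orthant2 t
  have hnonneg : 0 ≤ᵐ[volume.restrict (orthant n)] fun u => ‖h u‖ :=
    Filter.Eventually.of_forall fun u => norm_nonneg _
  have hmono1 : (∫ u in box (fun _ : Fin n => (N:ℝ)), ‖h u‖) ≤ ∫ u in box t, ‖h u‖ :=
    MeasureTheory.setIntegral_mono_set (hnorm.mono_set hsub2)
      (Filter.Eventually.of_forall fun u => norm_nonneg _)
      (HasSubset.Subset.eventuallyLE hsub1)
  have hdiff := MeasureTheory.integral_diff (measurableSet_box t) hInt hsub2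
  have hdiffn := MeasureTheory.integral_diff (measurableSet_box t) hnorm hsub2
  have hdist := hN N le_rfl
  rw [Real.dist_eq] at hdist
  have habs := abs_lt.1 hdist
  calc ‖(∫ u in box t, h u) - ∫ u in orthant n, h u‖
      = ‖∫ u in orthant n \ box t, h u‖ := by
        rw [hdiff, norm_sub_rev]
    _ ≤ ∫ u in orthant n \ box t, ‖h u‖ := norm_integral_le_integral_norm _
    _ = (∫ u in orthant n, ‖h u‖) - ∫ u in box t, ‖h u‖ := hdiffn
    _ ≤ (∫ u in orthant n, ‖h u‖) - ∫ u in box (fun _ : Fin n => (N:ℝ)), ‖h u‖ := by linarith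
    _ < ε := by linarith [habs.1]

/-- Absolute convergence of the Laplace integral of `G`. -/
lemma lapKer_G_integrable [CompleteSpace X] {n : ℕ} {f : (Fin n → ℝ) → X} (hf : LocInt f)
    {lam : Fin n → ℂ} {b : Fin n → ℝ} {M' : ℝ} (hM' : 0 ≤ M') (hbl : ∀ j, b j < (lam j).re)
    (hGb : ∀ r : Fin n → ℝ, (∀ j, 0 ≤ r j) → ‖∫ s in box r, f s‖ ≤ M' * ∏ j, Real.exp (b j * r j)) :
    IntegrableOn (fun u => Complex.exp (-(∑ j, lam j * (u j : ℂ))) • (∫ s in box u, f s))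
      (orthant n) := by
  have hδ : ∀ j, 0 < (lam j).re - b j := fun j => by linarith [hbl j]
  have hgint : IntegrableOn
      (fun u : Fin n → ℝ => M' * ∏ j, Real.exp (-((lam j).re - b j) * u j)) (orthant n) := by
    rw [orthant_eq2]
    exact (integrableOn_pi_prod _ (fun _ => measurableSet_Ici) _
      (fun j => exp_neg_integrableOn_Ici (hδ j))).const_mul M'
  apply MeasureTheory.Integrable.mono' hgint
  · apply Continuous.aestronglyMeasurable
    apply Continuous.smul _ (continuous_antider hf)
    exact Complex.continuous_exp.comp (Continuous.neg (continuous_finset_sum _ fun j _ =>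
      continuous_const.mul (Complex.continuous_ofReal.comp (continuous_apply j))))
  · filter_upwards [ae_restrict_mem measurableSet_orthant2] with u hu
    rw [norm_smul]
    have h1 : ‖Complex.exp (-(∑ j, lam j * (u j : ℂ)))‖ = ∏ j, Real.exp (-((lam j).re * u j)) := by
      rw [Complex.norm_exp]
      have h2 : (-(∑ j, lam j * (u j : ℂ))).re = ∑ j, -((lam j).re * u j) := by
        rw [Complex.neg_re, Complex.re_sum, ← Finset.sum_neg_distrib]
        exact Finset.sum_congr rfl fun j _ => by simp [Complex.mul_re]
      rw [h2, Real.exp_sum]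
    rw [h1]
    have hu0 : ∀ j, 0 ≤ u j := hu
    calc (∏ j, Real.exp (-((lam j).re * u j))) * ‖∫ s in box u, f s‖
        ≤ (∏ j, Real.exp (-((lam j).re * u j))) * (M' * ∏ j, Real.exp (b j * u j)) :=
          mul_le_mul_of_nonneg_left (hGb u hu0)
            (Finset.prod_nonneg fun j _ => Real.exp_nonneg _)
      _ = M' * ∏ j, Real.exp (-((lam j).re - b j) * u j) := by
          rw [← mul_assoc, mul_comm _ M', mul_assoc, ← Finset.prod_mul_distrib]
          congr 1
          refine Finset.prod_congr rfl fun j _ => ?_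
          rw [← Real.exp_add]
          congr 1
          ring

/-- If the antiderivative `G` of `f` satisfies the `2ⁿ`-term bound associated with `λ⁰` and
`Re λⱼ > max(Re λⱼ⁰, 0)` for all `j`, then `λ ∈ Ω_abs(G)`, `λ ∈ Ω(f) ∩ Ω_b(f)` and
`(Lf)(λ) = λ₁·…·λₙ·(LG)(λ)`. -/
theorem laplace_of_antiderivative [CompleteSpace X]
    (n : ℕ) (hn : 1 ≤ n) (f : (Fin n → ℝ) → X) (hf : LocInt f)
    (lam0 lam : Fin n → ℂ) (M : ℝ) (hM : 0 < M)
    (hG : ∀ t : Fin n → ℝ, (∀ j, 0 ≤ t j) →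
      ‖∫ s in box t, f s‖ ≤ M * ∑ S : Finset (Fin n),
        (∏ j ∈ S, Real.exp ((lam0 j).re * t j)) *
          ∏ j ∈ Sᶜ, ∫ s in (0:ℝ)..(t j), Real.exp ((lam0 j).re * s))
    (hlam : ∀ j, max ((lam0 j).re) 0 < (lam j).re) :
    OmegaAbs (fun t => ∫ s in box t, f s) lam ∧
    OmegaBdd f lam ∧
    LapConvTo f lam ((∏ j, lam j) • lapTr (fun t => ∫ s in box t, f s) lam) := by
  classical
  have hlamne : ∀ j, lam j ≠ 0 := by
    intro j h
    have h1 := hlam j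
    rw [h] at h1
    simp only [Complex.zero_re] at h1
    exact absurd h1 (not_lt.2 (le_max_right _ _))
  set b : Fin n → ℝ := fun j => (max ((lam0 j).re) 0 + (lam j).re)/2 with hbdef
  have hb1 : ∀ j, max ((lam0 j).re) 0 < b j := by
    intro j
    have := hlam j
    simp only [hbdef]
    linarith
  have hb2 : ∀ j, b j < (lam j).re := by
    intro j
    have := hlam j
    simp only [hbdef]
    linarith
  have hb0 : ∀ j, 0 < b j := fun j => lt_of_le_of_lt (le_max_right _ _) (hb1 j)
  obtain ⟨M', hM'0, hGb⟩ := Gexp_bound hM hG hb1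
  -- absolute convergence of the Laplace integral of G
  have habs : OmegaAbs (fun t => ∫ s in box t, f s) lam :=
    lapKer_G_integrable hf hM'0.le hb2 hGb
  -- uniform bound for the terms of the expansion
  set D : ℝ := M' * ∏ j, max 1 (‖lam j‖ / ((lam j).re - b j)) with hDdef
  have hD0 : 0 < D := by
    rw [hDdef]
    apply mul_pos hM'0
    exact Finset.prod_pos fun j _ => lt_of_lt_of_le one_pos (le_max_left _ _)
  have hident : ∀ t : Fin n → ℝ, (∀ j, 0 ≤ t j) → truncInt f lam t
      = ∑ S : Finset (Fin n), (∏ j ∈ Sᶜ, Complex.exp (-(lam j * (t j : ℂ)))) •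
          (∫ u in box (S.piecewise t fun _ => 1),
            (∏ j ∈ S, (lam j * Complex.exp (-(lam j * (u j : ℂ))))) •
              (∫ s in box (S.piecewise u t), f s)) := by
    intro t ht
    exact trunc_eq_sum hf lam hlamne t ht
  have hterm : ∀ (S : Finset (Fin n)) (t : Fin n → ℝ), (∀ j, 0 ≤ t j) →
      ‖(∏ j ∈ Sᶜ, Complex.exp (-(lam j * (t j : ℂ)))) •
          (∫ u in box (S.piecewise t fun _ => 1),
            (∏ j ∈ S, (lam j * Complex.exp (-(lam j * (u j : ℂ))))) •
              (∫ s in box (S.piecewise u t), f s))‖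
        ≤ D * ∏ j ∈ Sᶜ, Real.exp ((b j - (lam j).re) * t j) := by
    intro S t ht
    rw [norm_smul, norm_prod]
    have h1 : (∏ j ∈ Sᶜ, ‖Complex.exp (-(lam j * (t j : ℂ)))‖)
        = ∏ j ∈ Sᶜ, Real.exp (-((lam j).re * t j)) :=
      Finset.prod_congr rfl fun j _ => norm_cexp_neg_mul _ _
    rw [h1]
    calc (∏ j ∈ Sᶜ, Real.exp (-((lam j).re * t j))) * ‖∫ u in box (S.piecewise t fun _ => 1),
          (∏ j ∈ S, (lam j * Complex.exp (-(lam j * (u j : ℂ))))) •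
            (∫ s in box (S.piecewise u t), f s)‖
        ≤ (∏ j ∈ Sᶜ, Real.exp (-((lam j).re * t j))) * (D * ∏ j ∈ Sᶜ, Real.exp (b j * t j)) :=
          mul_le_mul_of_nonneg_left (term_bound hf hM'0.le hb2 hGb S t ht)
            (Finset.prod_nonneg fun j _ => Real.exp_nonneg _)
      _ = D * ∏ j ∈ Sᶜ, Real.exp ((b j - (lam j).re) * t j) := by
          rw [← mul_assoc, mul_comm _ D, mul_assoc, ← Finset.prod_mul_distrib]
          congr 1
          refine Finset.prod_congr rfl fun j _ => ?_
          rw [← Real.exp_add]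
          congr 1
          ring
  have hexp_le_one : ∀ (S : Finset (Fin n)) (t : Fin n → ℝ), (∀ j, 0 ≤ t j) →
      ∀ j ∈ Sᶜ, Real.exp ((b j - (lam j).re) * t j) ≤ 1 := by
    intro S t ht j _
    rw [Real.exp_le_one_iff]
    apply mul_nonpos_of_nonpos_of_nonneg _ (ht j)
    linarith [hb2 j]
  have htermD : ∀ (S : Finset (Fin n)) (t : Fin n → ℝ), (∀ j, 0 ≤ t j) →
      ‖(∏ j ∈ Sᶜ, Complex.exp (-(lam j * (t j : ℂ)))) •
          (∫ u in box (S.piecewise t fun _ => 1),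
            (∏ j ∈ S, (lam j * Complex.exp (-(lam j * (u j : ℂ))))) •
              (∫ s in box (S.piecewise u t), f s))‖ ≤ D := by
    intro S t ht
    refine (hterm S t ht).trans ?_
    calc D * ∏ j ∈ Sᶜ, Real.exp ((b j - (lam j).re) * t j) ≤ D * 1 := by
          apply mul_le_mul_of_nonneg_left _ hD0.le
          exact Finset.prod_le_one (fun j _ => Real.exp_nonneg _) (hexp_le_one S t ht)
      _ = D := mul_one D
  refine ⟨habs, ⟨2^n * D, ?_⟩, ?_⟩
  · -- OmegaBdd
    intro t
    by_cases hpos : ∀ j, 0 ≤ t j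
    · rw [hident t hpos]
      calc ‖∑ S : Finset (Fin n), (∏ j ∈ Sᶜ, Complex.exp (-(lam j * (t j : ℂ)))) •
            (∫ u in box (S.piecewise t fun _ => 1),
              (∏ j ∈ S, (lam j * Complex.exp (-(lam j * (u j : ℂ))))) •
                (∫ s in box (S.piecewise u t), f s))‖
          ≤ ∑ S : Finset (Fin n), ‖(∏ j ∈ Sᶜ, Complex.exp (-(lam j * (t j : ℂ)))) •
            (∫ u in box (S.piecewise t fun _ => 1),
              (∏ j ∈ S, (lam j * Complex.exp (-(lam j * (u j : ℂ))))) •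
                (∫ s in box (S.piecewise u t), f s))‖ := norm_sum_le _ _
        _ ≤ ∑ _S : Finset (Fin n), D := Finset.sum_le_sum fun S _ => htermD S t hpos
        _ = 2^n * D := by
            rw [Finset.sum_const, Finset.card_univ, Fintype.card_finset, Fintype.card_fin,
              nsmul_eq_mul]
            push_cast
            ring
    · push_neg at hpos
      obtain ⟨j, hj⟩ := hpos
      have hbox : box t = ∅ := Set.univ_pi_eq_empty (i := j) (Set.Icc_eq_empty (not_le.2 hj))
      rw [truncInt, hbox]
      simp only [MeasureTheory.Measure.restrict_empty, MeasureTheory.integral_zero_measure,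
        norm_zero]
      positivity
  · -- LapConvTo
    intro ε hε
    set P : ℝ := ‖∏ j, lam j‖ with hPdef
    have hP0 : 0 ≤ P := norm_nonneg _
    obtain ⟨k, hk⟩ := tail_small habs (ε/(2*(P+1))) (by positivity)
    have hne : (Finset.univ : Finset (Fin n)).Nonempty := ⟨⟨0, hn⟩, Finset.mem_univ _⟩
    set δ : ℝ := Finset.univ.inf' hne (fun j => (lam j).re - b j) with hδdef
    have hδ0 : 0 < δ := by
      rw [hδdef, Finset.lt_inf'_iff]
      intro j _
      linarith [hb2 j]
    have hδle : ∀ j, δ ≤ (lam j).re - b j := fun j =>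
      Finset.inf'_le _ (Finset.mem_univ j)
    set ε' : ℝ := ε/(2*(2^n*D+1)) with hε'def
    have hε'0 : 0 < ε' := by rw [hε'def]; positivity
    set Mfin : ℝ := max ((k:ℝ)+1) (1/(δ*ε')+1) with hMfin
    have hMfin0 : 0 < Mfin := lt_of_lt_of_le (by positivity) (le_max_left _ _)
    refine ⟨Mfin, hMfin0, ?_⟩
    intro t htM
    have ht0 : ∀ j, 0 ≤ t j := fun j => (hMfin0.trans (htM j)).le
    have htk : ∀ j, (k:ℝ) ≤ t j := fun j =>
      le_trans (le_trans (by linarith) (le_max_left ((k:ℝ)+1) _)) (htM j).le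
    -- decompose the sum
    rw [hident t ht0]
    rw [← Finset.sum_erase_add Finset.univ _ (Finset.mem_univ (Finset.univ : Finset (Fin n)))]
    -- the S = univ term
    have huniv : (∏ j ∈ (Finset.univ : Finset (Fin n))ᶜ, Complex.exp (-(lam j * (t j : ℂ)))) •
        (∫ u in box (Finset.univ.piecewise t fun _ => 1),
          (∏ j, (lam j * Complex.exp (-(lam j * (u j : ℂ))))) •
            (∫ s in box (Finset.univ.piecewise u t), f s))
        = (∏ j, lam j) • truncInt (fun r => ∫ s in box r, f s) lam t := by
      rw [Finset.compl_univ, Finset.prod_empty, one_smul]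
      rw [show Finset.univ.piecewise t (fun _ => (1:ℝ)) = t from Finset.piecewise_univ _ _]
      have hpu : ∀ u : Fin n → ℝ, Finset.univ.piecewise u t = u := fun u =>
        Finset.piecewise_univ _ _
      simp_rw [hpu]
      have hfac : ∀ u : Fin n → ℝ, (∏ j, (lam j * Complex.exp (-(lam j * (u j : ℂ)))))
          = (∏ j, lam j) * Complex.exp (-(∑ j, lam j * (u j : ℂ))) := by
        intro u
        rw [Finset.prod_mul_distrib]
        congr 1
        rw [show -(∑ j, lam j * (u j : ℂ)) = ∑ j, -(lam j * (u j : ℂ)) from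
          by rw [Finset.sum_neg_distrib], Complex.exp_sum]
      simp_rw [hfac, mul_smul]
      rw [integral_smul]
      rfl
    rw [huniv]
    -- bound the remainder terms
    have hrem : ∀ S ∈ (Finset.univ : Finset (Finset (Fin n))).erase Finset.univ,
        ‖(∏ j ∈ Sᶜ, Complex.exp (-(lam j * (t j : ℂ)))) •
          (∫ u in box (S.piecewise t fun _ => 1),
            (∏ j ∈ S, (lam j * Complex.exp (-(lam j * (u j : ℂ))))) •
              (∫ s in box (S.piecewise u t), f s))‖ ≤ D * Real.exp (-(δ * Mfin)) := by
      intro S hS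
      have hSne : S ≠ Finset.univ := (Finset.mem_erase.1 hS).1
      obtain ⟨j0, hj0⟩ : ∃ j0, j0 ∉ S := by
        by_contra hall
        push_neg at hall
        exact hSne (Finset.eq_univ_iff_forall.2 hall)
      have hj0c : j0 ∈ Sᶜ := Finset.mem_compl.2 hj0
      refine (hterm S t ht0).trans ?_
      apply mul_le_mul_of_nonneg_left _ hD0.le
      calc (∏ j ∈ Sᶜ, Real.exp ((b j - (lam j).re) * t j))
          = Real.exp ((b j0 - (lam j0).re) * t j0) *
              ∏ j ∈ Sᶜ.erase j0, Real.exp ((b j - (lam j).re) * t j) :=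
            (Finset.mul_prod_erase _ _ hj0c).symm
        _ ≤ Real.exp ((b j0 - (lam j0).re) * t j0) * 1 := by
            apply mul_le_mul_of_nonneg_left _ (Real.exp_nonneg _)
            apply Finset.prod_le_one (fun j _ => Real.exp_nonneg _)
            intro j hjer
            exact hexp_le_one S t ht0 j (Finset.mem_of_mem_erase hjer)
        _ ≤ Real.exp (-(δ * Mfin)) := by
            rw [mul_one, Real.exp_le_exp]
            calc (b j0 - (lam j0).re) * t j0 ≤ -δ * t j0 := by
                  apply mul_le_mul_of_nonneg_right _ (ht0 j0)
                  linarith [hδle j0]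
              _ ≤ -δ * Mfin := by
                  rw [neg_mul, neg_mul, neg_le_neg_iff]
                  exact mul_le_mul_of_nonneg_left (htM j0).le hδ0.le
              _ = -(δ * Mfin) := by ring
    -- bound exp(-(δ Mfin))
    have hsmall : Real.exp (-(δ * Mfin)) < ε' := by
      have h1 : 1/(δ*ε') < Mfin := lt_of_lt_of_le (by linarith) (le_max_right ((k:ℝ)+1) _)
      have h2 : 1/ε' < δ * Mfin := by
        have heq : δ * (1/(δ*ε')) = 1/ε' := by field_simp
        calc 1/ε' = δ * (1/(δ*ε')) := heq.symm
          _ < δ * Mfin := mul_lt_mul_of_pos_left h1 hδ0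
      have h3 : Real.exp (-(δ * Mfin)) ≤ 1/(δ * Mfin) := by
        rw [Real.exp_neg, inv_eq_one_div]
        apply one_div_le_one_div_of_le (by positivity)
        linarith [Real.add_one_le_exp (δ * Mfin)]
      refine h3.trans_lt ?_
      have h4 : (1:ℝ) < (δ * Mfin) * ε' := by
        rw [div_lt_iff₀ hε'0] at h2
        calc (1:ℝ) < δ * Mfin * ε' := h2
          _ = (δ * Mfin) * ε' := rfl
      rw [div_lt_iff₀ (by positivity : (0:ℝ) < δ * Mfin)]
      calc (1:ℝ) < (δ * Mfin) * ε' := h4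
        _ = ε' * (δ * Mfin) := mul_comm _ _
    -- conclude
    have hsum : ‖∑ S ∈ (Finset.univ : Finset (Finset (Fin n))).erase Finset.univ,
        (∏ j ∈ Sᶜ, Complex.exp (-(lam j * (t j : ℂ)))) •
          (∫ u in box (S.piecewise t fun _ => 1),
            (∏ j ∈ S, (lam j * Complex.exp (-(lam j * (u j : ℂ))))) •
              (∫ s in box (S.piecewise u t), f s))‖ < ε/2 := by
      have hcard : (((Finset.univ : Finset (Finset (Fin n))).erase Finset.univ).card : ℝ)
          ≤ 2^n := by
        have h5 : ((Finset.univ : Finset (Finset (Fin n))).erase Finset.univ).card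
            ≤ (Finset.univ : Finset (Finset (Fin n))).card :=
          Finset.card_le_card (Finset.erase_subset _ _)
        have h6 : (Finset.univ : Finset (Finset (Fin n))).card = 2^n := by
          rw [Finset.card_univ, Fintype.card_finset, Fintype.card_fin]
        calc (((Finset.univ : Finset (Finset (Fin n))).erase Finset.univ).card : ℝ)
            ≤ ((Finset.univ : Finset (Finset (Fin n))).card : ℝ) := by exact_mod_cast h5
          _ = 2^n := by exact_mod_cast h6
      have hDe0 : 0 ≤ D * Real.exp (-(δ * Mfin)) := by positivity
      calc ‖∑ S ∈ (Finset.univ : Finset (Finset (Fin n))).erase Finset.univ,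
          (∏ j ∈ Sᶜ, Complex.exp (-(lam j * (t j : ℂ)))) •
            (∫ u in box (S.piecewise t fun _ => 1),
              (∏ j ∈ S, (lam j * Complex.exp (-(lam j * (u j : ℂ))))) •
                (∫ s in box (S.piecewise u t), f s))‖
          ≤ ∑ S ∈ (Finset.univ : Finset (Finset (Fin n))).erase Finset.univ,
            ‖(∏ j ∈ Sᶜ, Complex.exp (-(lam j * (t j : ℂ)))) •
              (∫ u in box (S.piecewise t fun _ => 1),
                (∏ j ∈ S, (lam j * Complex.exp (-(lam j * (u j : ℂ))))) •
                  (∫ s in box (S.piecewise u t), f s))‖ := norm_sum_le _ _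
        _ ≤ ∑ _S ∈ (Finset.univ : Finset (Finset (Fin n))).erase Finset.univ,
            D * Real.exp (-(δ * Mfin)) := Finset.sum_le_sum hrem
        _ = (((Finset.univ : Finset (Finset (Fin n))).erase Finset.univ).card : ℝ) *
            (D * Real.exp (-(δ * Mfin))) := by rw [Finset.sum_const, nsmul_eq_mul]
        _ ≤ 2^n * (D * Real.exp (-(δ * Mfin))) := mul_le_mul_of_nonneg_right hcard hDe0
        _ = (2^n * D) * Real.exp (-(δ * Mfin)) := by ring
        _ < (2^n * D) * ε' := mul_lt_mul_of_pos_left hsmall (by positivity)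
        _ < ε/2 := by
            rw [hε'def]
            have hlt : (2:ℝ)^n*D < 2^n*D + 1 := by linarith
            calc (2^n*D) * (ε/(2*(2^n*D+1)))
                < (2^n*D+1) * (ε/(2*(2^n*D+1))) :=
                  mul_lt_mul_of_pos_right hlt (by positivity)
              _ = ε/2 := by field_simp
    have hTtail : ‖truncInt (fun r => ∫ s in box r, f s) lam t -
        lapTr (fun r => ∫ s in box r, f s) lam‖ < ε/(2*(P+1)) := hk t htk
    have hB : ‖(∏ j, lam j) • truncInt (fun r => ∫ s in box r, f s) lam t -
        (∏ j, lam j) • lapTr (fun r => ∫ s in box r, f s) lam‖ < ε/2 := by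
      rw [← smul_sub, norm_smul, ← hPdef]
      calc P * ‖truncInt (fun r => ∫ s in box r, f s) lam t -
            lapTr (fun r => ∫ s in box r, f s) lam‖
          ≤ P * (ε/(2*(P+1))) := mul_le_mul_of_nonneg_left hTtail.le hP0
        _ < (P+1) * (ε/(2*(P+1))) := mul_lt_mul_of_pos_right (by linarith) (by positivity)
        _ = ε/2 := by field_simp
    calc ‖(∑ S ∈ (Finset.univ : Finset (Finset (Fin n))).erase Finset.univ,
          (∏ j ∈ Sᶜ, Complex.exp (-(lam j * (t j : ℂ)))) •
            (∫ u in box (S.piecewise t fun _ => 1),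
              (∏ j ∈ S, (lam j * Complex.exp (-(lam j * (u j : ℂ))))) •
                (∫ s in box (S.piecewise u t), f s)))
          + (∏ j, lam j) • truncInt (fun r => ∫ s in box r, f s) lam t
          - (∏ j, lam j) • lapTr (fun r => ∫ s in box r, f s) lam‖
        = ‖(∑ S ∈ (Finset.univ : Finset (Finset (Fin n))).erase Finset.univ,
          (∏ j ∈ Sᶜ, Complex.exp (-(lam j * (t j : ℂ)))) •
            (∫ u in box (S.piecewise t fun _ => 1),
              (∏ j ∈ S, (lam j * Complex.exp (-(lam j * (u j : ℂ))))) •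
                (∫ s in box (S.piecewise u t), f s)))
          + ((∏ j, lam j) • truncInt (fun r => ∫ s in box r, f s) lam t
          - (∏ j, lam j) • lapTr (fun r => ∫ s in box r, f s) lam)‖ := by
          rw [add_sub_assoc]
      _ ≤ ‖∑ S ∈ (Finset.univ : Finset (Finset (Fin n))).erase Finset.univ,
          (∏ j ∈ Sᶜ, Complex.exp (-(lam j * (t j : ℂ)))) •
            (∫ u in box (S.piecewise t fun _ => 1),
              (∏ j ∈ S, (lam j * Complex.exp (-(lam j * (u j : ℂ))))) •
                (∫ s in box (S.piecewise u t), f s))‖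
          + ‖(∏ j, lam j) • truncInt (fun r => ∫ s in box r, f s) lam t
          - (∏ j, lam j) • lapTr (fun r => ∫ s in box r, f s) lam‖ := norm_add_le _ _
      _ < ε/2 + ε/2 := add_lt_add hsum hB
      _ = ε := by ring
end
end

section
/- Let X be a complex Banach space, n ≥ 1, x ∈ X, and let f : [0,∞)^n → X be locally Bochner integrable and bounded (i.e. sup{‖f(t)‖ : t ∈ [0,∞)^n} < ∞). If f(t₁,…,tₙ) → x as t₁ → +∞, …, tₙ → +∞ (in the sense that for every ε > 0 there is M with ‖f(t) − x‖ < ε whenever all tⱼ > M), then for all real λⱼ > 0 one has λ ∈ Ω_abs(f), and λ₁·…·λₙ·(Lf)(λ₁,…,λₙ) → x as (λ₁,…,λₙ) → (0⁺,…,0⁺) within (0,∞)^n. -/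
open MeasureTheory Set Filter

noncomputable section

variable {X : Type*} [NormedAddCommGroup X] [NormedSpace ℂ X]

namespace AbelAux

/-! ### One-dimensional lemmas -/

lemma oneD_int {a : ℝ} (ha : 0 < a) :
    IntegrableOn (fun u : ℝ => Real.exp (-(a*u))) (Ici 0) := by
  have := exp_neg_integrableOn_Ioi 0 ha
  simp only [neg_mul] at this
  exact (integrableOn_Ici_iff_integrableOn_Ioi (by simp)).2 this

lemma oneD_integral {a : ℝ} (ha : 0 < a) :
    ∫ u in Ici (0:ℝ), Real.exp (-(a*u)) = a⁻¹ := by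
  rw [integral_Ici_eq_integral_Ioi]
  have h := integral_comp_mul_left_Ioi (fun u => Real.exp (-u)) 0 ha
  simp only [mul_zero, integral_exp_neg_Ioi_zero, smul_eq_mul, mul_one] at h
  exact h

lemma oneD_trunc {a M : ℝ} (ha : 0 < a) (hM : 0 ≤ M) :
    ∫ u in Icc (0:ℝ) M, Real.exp (-(a*u)) ≤ M := by
  have h1 : ∫ u in Icc (0:ℝ) M, Real.exp (-(a*u)) ≤ ∫ _ in Icc (0:ℝ) M, (1:ℝ) := by
    apply setIntegral_mono_on
    · exact (Real.continuous_exp.comp (by continuity)).integrableOn_Icc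
    · refine integrableOn_const ?_
      rw [Real.volume_Icc]
      exact ENNReal.ofReal_ne_top
    · exact measurableSet_Icc
    · intro u hu
      rw [Real.exp_le_one_iff]
      have := hu.1
      nlinarith [ha.le]
  calc _ ≤ _ := h1
    _ = M := by
        simp [Real.volume_Icc, ENNReal.toReal_ofReal hM, hM]

/-! ### Products over `Fin n` -/

lemma indicator_pi {n : ℕ} (s : Fin n → Set ℝ) (g : Fin n → ℝ → ℝ) :
    (Set.univ.pi s).indicator (fun t : Fin n → ℝ => ∏ j, g j (t j)) =
      fun t => ∏ j, (s j).indicator (g j) (t j) := by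
  funext t
  by_cases h : t ∈ Set.univ.pi s
  · rw [indicator_of_mem h]
    exact Finset.prod_congr rfl fun j _ => (indicator_of_mem (h j (Set.mem_univ j)) _).symm
  · rw [indicator_of_notMem h]
    rw [Set.mem_univ_pi] at h
    push_neg at h
    obtain ⟨j, hj⟩ := h
    exact (Finset.prod_eq_zero (Finset.mem_univ j) (indicator_of_notMem hj _)).symm

lemma pi_setIntegrable {n : ℕ} (s : Fin n → Set ℝ) (hs : ∀ j, MeasurableSet (s j))
    (g : Fin n → ℝ → ℝ) (hg : ∀ j, IntegrableOn (g j) (s j)) :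
    IntegrableOn (fun t : Fin n → ℝ => ∏ j, g j (t j)) (Set.univ.pi s) := by
  have h : Integrable ((Set.univ.pi s).indicator fun t : Fin n → ℝ => ∏ j, g j (t j)) := by
    rw [indicator_pi]
    exact Integrable.fintype_prod (f := fun j => (s j).indicator (g j))
      (fun j => (integrable_indicator_iff (hs j)).2 (hg j))
  exact (integrable_indicator_iff (MeasurableSet.univ_pi hs)).1 h

lemma pi_setIntegral {n : ℕ} (s : Fin n → Set ℝ) (hs : ∀ j, MeasurableSet (s j))
    (g : Fin n → ℝ → ℝ) :
    ∫ t in Set.univ.pi s, ∏ j, g j (t j) = ∏ j, ∫ u in s j, g j u := by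
  rw [← integral_indicator (MeasurableSet.univ_pi hs), indicator_pi,
    integral_fintype_prod_volume_eq_prod (f := fun j => (s j).indicator (g j))]
  exact Finset.prod_congr rfl fun j _ => integral_indicator (hs j)

/-! ### The exponential weight -/

/-- The real exponential weight, in product form. -/
def Efun {n : ℕ} (lam : Fin n → ℝ) : (Fin n → ℝ) → ℝ :=
  fun t => ∏ j, Real.exp (-(lam j * t j))

lemma Efun_nonneg {n : ℕ} (lam : Fin n → ℝ) (t : Fin n → ℝ) : 0 ≤ Efun lam t :=
  Finset.prod_nonneg fun j _ => (Real.exp_pos _).le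

lemma Efun_eq {n : ℕ} (lam : Fin n → ℝ) (t : Fin n → ℝ) :
    Efun lam t = Real.exp (-(∑ j, lam j * t j)) := by
  rw [Efun, ← Real.exp_sum, ← Finset.sum_neg_distrib]

lemma lapKer_eq {n : ℕ} (lam : Fin n → ℝ) (f : (Fin n → ℝ) → X) (t : Fin n → ℝ) :
    lapKer (fun j => (lam j : ℂ)) f t = ((Efun lam t : ℝ) : ℂ) • f t := by
  have h1 : (-(∑ j, (lam j : ℂ) * (t j : ℂ))) = ((-(∑ j, lam j * t j) : ℝ) : ℂ) := by
    push_cast; ring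
  rw [lapKer, h1, ← Complex.ofReal_exp, Efun_eq]

lemma lapKer_norm {n : ℕ} (lam : Fin n → ℝ) (f : (Fin n → ℝ) → X) (t : Fin n → ℝ) :
    ‖lapKer (fun j => (lam j : ℂ)) f t‖ = Efun lam t * ‖f t‖ := by
  rw [lapKer_eq, norm_smul, Complex.norm_real, Real.norm_eq_abs,
    abs_of_nonneg (Efun_nonneg lam t)]

lemma orthant_pi (n : ℕ) : orthant n = Set.univ.pi (fun _ : Fin n => Ici (0:ℝ)) := by
  ext t; simp only [orthant, Set.mem_univ_pi, mem_setOf_eq, mem_Ici]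

lemma orthant_meas (n : ℕ) : MeasurableSet (orthant n) := by
  rw [orthant_pi]; exact MeasurableSet.univ_pi fun _ => measurableSet_Ici

lemma EintOn {n : ℕ} (lam : Fin n → ℝ) (hlam : ∀ j, 0 < lam j) :
    IntegrableOn (Efun lam) (orthant n) := by
  rw [orthant_pi]
  exact pi_setIntegrable (fun _ : Fin n => Ici (0:ℝ)) (fun _ => measurableSet_Ici)
    (fun j u => Real.exp (-(lam j * u))) (fun j => oneD_int (hlam j))

lemma Eintegral {n : ℕ} (lam : Fin n → ℝ) (hlam : ∀ j, 0 < lam j) :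
    ∫ t in orthant n, Efun lam t = ∏ j, (lam j)⁻¹ := by
  rw [orthant_pi]
  simp only [Efun]
  rw [pi_setIntegral _ (fun _ => measurableSet_Ici) (fun j u => Real.exp (-(lam j * u)))]
  exact Finset.prod_congr rfl fun j _ => oneD_integral (hlam j)

lemma strip_eq {n : ℕ} (M : ℝ) (j₀ : Fin n) :
    orthant n ∩ {t : Fin n → ℝ | t j₀ ≤ M} =
      Set.univ.pi (fun j => if j = j₀ then Icc (0:ℝ) M else Ici 0) := by
  ext t
  simp only [mem_inter_iff, mem_setOf_eq, Set.mem_univ_pi, orthant]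
  constructor
  · rintro ⟨h1, h2⟩ j
    by_cases hj : j = j₀
    · subst hj; simp [h1 j, h2]
    · simp [hj, h1 j]
  · intro h
    constructor
    · intro j
      have := h j
      by_cases hj : j = j₀
      · rw [if_pos hj] at this; exact this.1
      · rw [if_neg hj] at this; exact this
    · have := h j₀
      rw [if_pos rfl] at this
      exact this.2

lemma strip_bound {n : ℕ} (lam : Fin n → ℝ) (hlam : ∀ j, 0 < lam j) {M : ℝ} (hM : 0 ≤ M)
    (j₀ : Fin n) :
    ∫ t in orthant n ∩ {t : Fin n → ℝ | t j₀ ≤ M}, Efun lam t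
      ≤ M * ∏ i ∈ Finset.univ.erase j₀, (lam i)⁻¹ := by
  rw [strip_eq]
  simp only [Efun]
  rw [pi_setIntegral _ (fun j => by split <;> [exact measurableSet_Icc; exact measurableSet_Ici])
      (fun j u => Real.exp (-(lam j * u)))]
  rw [← Finset.mul_prod_erase Finset.univ _ (Finset.mem_univ j₀)]
  have h2 : ∏ i ∈ Finset.univ.erase j₀,
      (∫ u in (if i = j₀ then Icc (0:ℝ) M else Ici 0), Real.exp (-(lam i * u)))
      = ∏ i ∈ Finset.univ.erase j₀, (lam i)⁻¹ := by
    refine Finset.prod_congr rfl fun i hi => ?_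
    rw [if_neg (Finset.ne_of_mem_erase hi), oneD_integral (hlam i)]
  rw [h2]
  have h1 : ∫ u in (if j₀ = j₀ then Icc (0:ℝ) M else Ici 0), Real.exp (-(lam j₀ * u)) ≤ M := by
    rw [if_pos rfl]; exact oneD_trunc (hlam j₀) hM
  exact mul_le_mul_of_nonneg_right h1
    (Finset.prod_nonneg fun i _ => inv_nonneg.2 (hlam i).le)

end AbelAux

set_option maxHeartbeats 1000000 in
/-- Abelian/Tauberian result at infinity: if `f` is bounded on `[0,∞)^n` and `f(t) → x` as
`t₁ → ∞, …, tₙ → ∞`, then for all real `λⱼ > 0` the Laplace integral converges absolutely at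
`λ`, and `λ₁·…·λₙ·(Lf)(λ) → x` as `(λ₁,…,λₙ) → (0⁺,…,0⁺)` within `(0,∞)^n`. -/
theorem abelian_at_infinity [CompleteSpace X]
    (n : ℕ) (hn : 1 ≤ n) (x : X) (f : (Fin n → ℝ) → X) (hf : LocInt f)
    (hbd : ∃ C, ∀ t ∈ orthant n, ‖f t‖ ≤ C)
    (hx : ∀ ε > 0, ∃ M, ∀ t ∈ orthant n, (∀ j, M < t j) → ‖f t - x‖ < ε) :
    (∀ lam : Fin n → ℝ, (∀ j, 0 < lam j) →
      OmegaAbs f (fun j => (lam j : ℂ))) ∧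
    (∀ ε > 0, ∃ δ > 0, ∀ lam : Fin n → ℝ, (∀ j, 0 < lam j ∧ lam j < δ) →
      ‖(∏ j, (lam j : ℂ)) • lapTr f (fun j => (lam j : ℂ)) - x‖ < ε) := by
  classical
  open AbelAux in
  -- measurability of f on the orthant
  have hcover : orthant n = ⋃ k : ℕ, box (fun _ => (k : ℝ)) := by
    ext t
    simp only [orthant, box, mem_setOf_eq, mem_iUnion, Set.mem_univ_pi, mem_Icc]
    constructor
    · intro h
      have hB : ∀ j, t j ≤ ∑ i, |t i| := by
        intro j
        calc t j ≤ |t j| := le_abs_self _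
          _ ≤ ∑ i, |t i| := Finset.single_le_sum (fun i _ => abs_nonneg (t i)) (Finset.mem_univ j)
      obtain ⟨k, hk⟩ := exists_nat_ge (∑ i, |t i|)
      exact ⟨k, fun j => ⟨h j, (hB j).trans hk⟩⟩
    · rintro ⟨k, hk⟩ j
      exact (hk j).1
  have hmeas : AEStronglyMeasurable f (volume.restrict (orthant n)) := by
    rw [hcover]
    exact aestronglyMeasurable_iUnion_iff.2 fun k => (hf _).aestronglyMeasurable
  obtain ⟨C, hC⟩ := hbd
  have hC0 : 0 ≤ C := le_trans (norm_nonneg (f 0)) (hC 0 fun j => le_refl 0)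
  -- Part 1
  have part1 : ∀ lam : Fin n → ℝ, (∀ j, 0 < lam j) → OmegaAbs f (fun j => (lam j : ℂ)) := by
    intro lam hlam
    have hE : IntegrableOn (Efun lam) (orthant n) := EintOn lam hlam
    refine Integrable.mono' (hE.const_mul C) ?_ ?_
    · have hcont : Continuous fun t : Fin n → ℝ =>
          Complex.exp (-(∑ j, ((lam j : ℂ)) * (t j : ℂ))) := by fun_prop
      exact hcont.aestronglyMeasurable.smul hmeas
    · filter_upwards [ae_restrict_mem (orthant_meas n)] with t ht
      rw [lapKer_norm]
      calc Efun lam t * ‖f t‖ ≤ Efun lam t * C :=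
            mul_le_mul_of_nonneg_left (hC t ht) (Efun_nonneg lam t)
        _ = C * Efun lam t := mul_comm _ _
  refine ⟨part1, ?_⟩
  -- Part 2
  intro ε hε
  set C' : ℝ := C + ‖x‖ with hC'def
  have hC'0 : 0 ≤ C' := by positivity
  obtain ⟨M₀, hM₀⟩ := hx (ε/2) (half_pos hε)
  set M : ℝ := max M₀ 1 with hMdef
  have hM1 : (1:ℝ) ≤ M := le_max_right _ _
  have hM0 : (0:ℝ) < M := lt_of_lt_of_le one_pos hM1
  have hnpos : (0:ℝ) < (n:ℝ) := by exact_mod_cast hn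
  have hCp : (0:ℝ) < C' + 1 := by linarith
  set δ : ℝ := ε / (2 * (C' + 1) * n * M) with hδdef
  have hden : (0:ℝ) < 2 * (C' + 1) * n * M :=
    mul_pos (mul_pos (mul_pos two_pos hCp) hnpos) hM0
  have hδ : 0 < δ := div_pos hε hden
  have heq : 2 * (C' + 1) * (n:ℝ) * M * δ = ε := by
    rw [hδdef]; field_simp
  have hM₀le : M₀ ≤ M := le_max_left _ _
  clear_value C' M δ
  refine ⟨δ, hδ, ?_⟩
  intro lam hlam
  have hlam0 : ∀ j, 0 < lam j := fun j => (hlam j).1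
  have hP : (0:ℝ) < ∏ j, lam j := Finset.prod_pos fun j _ => hlam0 j
  have hPinv : (∏ j, lam j) * (∏ j, (lam j)⁻¹) = 1 := by
    rw [← Finset.prod_mul_distrib]
    exact Finset.prod_eq_one fun j _ => mul_inv_cancel₀ (hlam0 j).ne'
  have hPj : ∀ j : Fin n, (∏ i, lam i) * ∏ i ∈ Finset.univ.erase j, (lam i)⁻¹ = lam j := by
    intro j
    rw [← Finset.mul_prod_erase Finset.univ lam (Finset.mem_univ j), mul_assoc,
      ← Finset.prod_mul_distrib,
      Finset.prod_congr rfl (fun i _ => mul_inv_cancel₀ (hlam0 i).ne'),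
      Finset.prod_const_one, mul_one]
  set g : (Fin n → ℝ) → X := fun t => f t - x with hgdef
  have hfInt : IntegrableOn (lapKer (fun j => (lam j : ℂ)) f) (orthant n) := part1 lam hlam0
  have hEint : IntegrableOn (Efun lam) (orthant n) := EintOn lam hlam0
  have hxInt : IntegrableOn (fun t => ((Efun lam t : ℝ) : ℂ) • x) (orthant n) :=
    (hEint.ofReal).smul_const x
  have hgInt : IntegrableOn (lapKer (fun j => (lam j : ℂ)) g) (orthant n) := by
    have heq2 : lapKer (fun j => (lam j : ℂ)) g
        = fun t => lapKer (fun j => (lam j : ℂ)) f t - ((Efun lam t : ℝ) : ℂ) • x := by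
      funext t
      rw [lapKer_eq, lapKer_eq, hgdef, smul_sub]
    rw [heq2]
    exact hfInt.sub hxInt
  have hEintegral : ∫ t in orthant n, Efun lam t = ∏ j, (lam j)⁻¹ := Eintegral lam hlam0
  -- splitting of the transform
  have hsplit : lapTr f (fun j => (lam j : ℂ))
      = (∫ t in orthant n, lapKer (fun j => (lam j : ℂ)) g t)
        + ((∏ j, (lam j)⁻¹ : ℝ) : ℂ) • x := by
    have h1 : ∀ t, lapKer (fun j => (lam j : ℂ)) f t
        = lapKer (fun j => (lam j : ℂ)) g t + ((Efun lam t : ℝ) : ℂ) • x := by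
      intro t
      rw [lapKer_eq, lapKer_eq, hgdef, smul_sub, sub_add_cancel]
    rw [lapTr]
    calc ∫ t in orthant n, lapKer (fun j => (lam j : ℂ)) f t
        = ∫ t in orthant n,
            (lapKer (fun j => (lam j : ℂ)) g t + ((Efun lam t : ℝ) : ℂ) • x) := by
          simp_rw [h1]
      _ = (∫ t in orthant n, lapKer (fun j => (lam j : ℂ)) g t)
            + ∫ t in orthant n, ((Efun lam t : ℝ) : ℂ) • x := integral_add hgInt hxInt
      _ = _ := by
          have hoR : (∫ t in orthant n, ((Efun lam t : ℝ) : ℂ))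
              = ((∏ j, (lam j)⁻¹ : ℝ) : ℂ) := by
            rw [← hEintegral]; exact integral_ofReal
          rw [integral_smul_const, hoR]
  have hprodC : (∏ j, ((lam j : ℂ))) = ((∏ j, lam j : ℝ) : ℂ) := by push_cast; rfl
  have hkey : (∏ j, ((lam j : ℂ))) • lapTr f (fun j => (lam j : ℂ)) - x
      = (∏ j, ((lam j : ℂ))) • ∫ t in orthant n, lapKer (fun j => (lam j : ℂ)) g t := by
    rw [hsplit, smul_add, hprodC, smul_smul, ← Complex.ofReal_mul, hPinv,
      Complex.ofReal_one, one_smul, add_sub_cancel_right]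
  rw [hkey]
  -- norm estimates
  have hnorm : ‖(∏ j, ((lam j : ℂ))) • ∫ t in orthant n, lapKer (fun j => (lam j : ℂ)) g t‖
      ≤ (∏ j, lam j) * ∫ t in orthant n, Efun lam t * ‖g t‖ := by
    rw [norm_smul, hprodC, Complex.norm_real, Real.norm_eq_abs, abs_of_pos hP]
    refine mul_le_mul_of_nonneg_left ?_ hP.le
    calc ‖∫ t in orthant n, lapKer (fun j => (lam j : ℂ)) g t‖
        ≤ ∫ t in orthant n, ‖lapKer (fun j => (lam j : ℂ)) g t‖ :=
          norm_integral_le_integral_norm _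
      _ = ∫ t in orthant n, Efun lam t * ‖g t‖ := by simp_rw [lapKer_norm]
  -- pointwise bound
  have hSmeas : ∀ j : Fin n, MeasurableSet {u : Fin n → ℝ | u j ≤ M} := fun j =>
    measurableSet_le (measurable_pi_apply j) measurable_const
  have hSind : ∀ j : Fin n,
      IntegrableOn (({u : Fin n → ℝ | u j ≤ M}).indicator (Efun lam)) (orthant n) := by
    intro j
    have h2 : IntegrableOn (Efun lam) ({u : Fin n → ℝ | u j ≤ M} ∩ orthant n) :=
      hEint.mono_set inter_subset_right
    refine (integrable_indicator_iff (hSmeas j)).2 ?_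
    show Integrable (Efun lam) ((volume.restrict (orthant n)).restrict {u : Fin n → ℝ | u j ≤ M})
    rw [Measure.restrict_restrict (hSmeas j)]
    exact h2
  have hbound : ∀ t ∈ orthant n, Efun lam t * ‖g t‖
      ≤ ε/2 * Efun lam t
        + C' * ∑ j, ({u : Fin n → ℝ | u j ≤ M}).indicator (Efun lam) t := by
    intro t ht
    have hsum_nonneg : 0 ≤ ∑ j, ({u : Fin n → ℝ | u j ≤ M}).indicator (Efun lam) t :=
      Finset.sum_nonneg fun j _ => indicator_nonneg (fun u _ => Efun_nonneg lam u) t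
    by_cases hall : ∀ j, M < t j
    · have hgt : ‖g t‖ ≤ ε/2 := by
        rw [hgdef]
        exact (hM₀ t ht fun j => lt_of_le_of_lt hM₀le (hall j)).le
      have h2 : Efun lam t * ‖g t‖ ≤ ε/2 * Efun lam t := by
        rw [mul_comm (ε/2)]
        exact mul_le_mul_of_nonneg_left hgt (Efun_nonneg lam t)
      calc Efun lam t * ‖g t‖ ≤ ε/2 * Efun lam t := h2
        _ ≤ ε/2 * Efun lam t
            + C' * ∑ j, ({u : Fin n → ℝ | u j ≤ M}).indicator (Efun lam) t :=
          le_add_of_nonneg_right (mul_nonneg hC'0 hsum_nonneg)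
    · push_neg at hall
      obtain ⟨j₀, hj₀⟩ := hall
      have hgt : ‖g t‖ ≤ C' := by
        rw [hgdef, hC'def]
        exact (norm_sub_le _ _).trans (add_le_add_left (hC t ht) _)
      have h1 : Efun lam t * ‖g t‖ ≤ C' * Efun lam t := by
        rw [mul_comm]
        exact mul_le_mul_of_nonneg_right hgt (Efun_nonneg lam t)
      have h3 : Efun lam t ≤ ∑ j, ({u : Fin n → ℝ | u j ≤ M}).indicator (Efun lam) t :=
        calc Efun lam t = ({u : Fin n → ℝ | u j₀ ≤ M}).indicator (Efun lam) t :=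
              (indicator_of_mem (show t ∈ {u : Fin n → ℝ | u j₀ ≤ M} from hj₀)
                (Efun lam)).symm
          _ ≤ ∑ j, ({u : Fin n → ℝ | u j ≤ M}).indicator (Efun lam) t :=
              Finset.single_le_sum
                (f := fun j => ({u : Fin n → ℝ | u j ≤ M}).indicator (Efun lam) t)
                (fun j _ => indicator_nonneg (fun u _ => Efun_nonneg lam u) t)
                (Finset.mem_univ j₀)
      have h4 : C' * Efun lam t
          ≤ C' * ∑ j, ({u : Fin n → ℝ | u j ≤ M}).indicator (Efun lam) t :=
        mul_le_mul_of_nonneg_left h3 hC'0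
      calc Efun lam t * ‖g t‖ ≤ C' * Efun lam t := h1
        _ ≤ C' * ∑ j, ({u : Fin n → ℝ | u j ≤ M}).indicator (Efun lam) t := h4
        _ ≤ ε/2 * Efun lam t
            + C' * ∑ j, ({u : Fin n → ℝ | u j ≤ M}).indicator (Efun lam) t :=
          le_add_of_nonneg_left (mul_nonneg (half_pos hε).le (Efun_nonneg lam t))
  -- integral bounds
  have hLHSint : IntegrableOn (fun t => Efun lam t * ‖g t‖) (orthant n) := by
    have heq3 : (fun t => Efun lam t * ‖g t‖)
        = fun t => ‖lapKer (fun j => (lam j : ℂ)) g t‖ := by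
      funext t; rw [lapKer_norm]
    rw [heq3]
    exact hgInt.norm
  have hRHSint : IntegrableOn (fun t => ε/2 * Efun lam t
      + C' * ∑ j, ({u : Fin n → ℝ | u j ≤ M}).indicator (Efun lam) t) (orthant n) := by
    refine (hEint.const_mul _).add (Integrable.const_mul ?_ _)
    exact integrable_finset_sum _ fun j _ => hSind j
  have hmono : ∫ t in orthant n, Efun lam t * ‖g t‖
      ≤ ∫ t in orthant n, (ε/2 * Efun lam t
        + C' * ∑ j, ({u : Fin n → ℝ | u j ≤ M}).indicator (Efun lam) t) :=
    setIntegral_mono_on hLHSint hRHSint (orthant_meas n) hbound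
  have hIj : ∀ j : Fin n,
      ∫ t in orthant n, ({u : Fin n → ℝ | u j ≤ M}).indicator (Efun lam) t
        ≤ M * ∏ i ∈ Finset.univ.erase j, (lam i)⁻¹ := by
    intro j
    rw [integral_indicator (hSmeas j), Measure.restrict_restrict (hSmeas j),
      Set.inter_comm]
    exact strip_bound lam hlam0 hM0.le j
  have hRHSval : ∫ t in orthant n, (ε/2 * Efun lam t
      + C' * ∑ j, ({u : Fin n → ℝ | u j ≤ M}).indicator (Efun lam) t)
      ≤ ε/2 * (∏ j, (lam j)⁻¹)
        + C' * ∑ j, M * ∏ i ∈ Finset.univ.erase j, (lam i)⁻¹ := by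
    rw [integral_add (hEint.const_mul _)
      (Integrable.const_mul (integrable_finset_sum _ fun j _ => hSind j) _),
      integral_const_mul, integral_const_mul, integral_finset_sum _ fun j _ => hSind j,
      hEintegral]
    exact add_le_add_right
      (mul_le_mul_of_nonneg_left (Finset.sum_le_sum fun j _ => hIj j) hC'0) _
  -- final arithmetic
  have hsumlam : ∑ j, lam j ≤ (n:ℝ) * δ := by
    calc ∑ j, lam j ≤ ∑ _j : Fin n, δ := Finset.sum_le_sum fun j _ => (hlam j).2.le
      _ = (n:ℝ) * δ := by rw [Finset.sum_const, Finset.card_univ, Fintype.card_fin,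
          nsmul_eq_mul]
  have hPsum : (∏ j, lam j) * ∑ j, M * ∏ i ∈ Finset.univ.erase j, (lam i)⁻¹
      = M * ∑ j, lam j := by
    rw [Finset.mul_sum, Finset.mul_sum]
    refine Finset.sum_congr rfl fun j _ => ?_
    rw [← hPj j]; ring
  calc ‖(∏ j, ((lam j : ℂ))) • ∫ t in orthant n, lapKer (fun j => (lam j : ℂ)) g t‖
      ≤ (∏ j, lam j) * ∫ t in orthant n, Efun lam t * ‖g t‖ := hnorm
    _ ≤ (∏ j, lam j) * (ε/2 * (∏ j, (lam j)⁻¹)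
        + C' * ∑ j, M * ∏ i ∈ Finset.univ.erase j, (lam i)⁻¹) :=
        mul_le_mul_of_nonneg_left (hmono.trans hRHSval) hP.le
    _ = ε/2 * ((∏ j, lam j) * (∏ j, (lam j)⁻¹))
        + C' * ((∏ j, lam j) * ∑ j, M * ∏ i ∈ Finset.univ.erase j, (lam i)⁻¹) := by ring
    _ = ε/2 + C' * (M * ∑ j, lam j) := by rw [hPinv, hPsum, mul_one]
    _ < ε := by
        have h5 : C' * (M * ∑ j, lam j) ≤ C' * (M * ((n:ℝ) * δ)) :=
          mul_le_mul_of_nonneg_left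
            (mul_le_mul_of_nonneg_left hsumlam hM0.le) hC'0
        have h6 : (0:ℝ) < M * ((n:ℝ) * δ) := by positivity
        have h7 : C' * (M * ((n:ℝ) * δ)) + M * ((n:ℝ) * δ)
            = (C' + 1) * (M * ((n:ℝ) * δ)) := by ring
        have h8 : (C' + 1) * (M * ((n:ℝ) * δ)) = ε / 2 := by rw [← heq]; ring
        linarith
end
end

section
/- Let X be a complex Banach space, n ≥ 1 and 0 < αⱼ ≤ π for all j ∈ {1,…,n}. Let f : Σ_{α₁} × … × Σ_{αₙ} → X be holomorphic and suppose that for all βⱼ ∈ (0,αⱼ) (j = 1,…,n) the set {f(z₁,…,zₙ) : zⱼ ∈ Σ_{βⱼ} for all j} is bounded in X. Fix βⱼ ∈ (0,αⱼ) for each j and x ∈ X. Then f(t₁,…,tₙ) → x as (t₁,…,tₙ) → (0,…,0) along positive reals if and only if f(z₁,…,zₙ) → x as (z₁,…,zₙ) → (0,…,0) with (z₁,…,zₙ) ∈ Σ_{β₁} × … × Σ_{βₙ}. -/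
open MeasureTheory Set Filter

noncomputable section

variable {X : Type*} [NormedAddCommGroup X] [NormedSpace ℂ X]

/-- The open sector `Σ_α = {z ∈ ℂ ∖ {0} : |arg z| < α}`. -/
def sector (α : ℝ) : Set ℂ := {z : ℂ | z ≠ 0 ∧ |Complex.arg z| < α}

section SectorHelpers

open Complex Set
lemma my_arg_exp (w : ℂ) (h1 : -Real.pi < w.im) (h2 : w.im ≤ Real.pi) :
    (Complex.exp w).arg = w.im := by
  have h : Complex.exp w = (Real.exp w.re : ℝ) * Complex.exp (w.im * I) := by
    rw [Complex.ofReal_exp, ← Complex.exp_add]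
    congr 1
    exact (Complex.re_add_im w).symm
  rw [h, Complex.arg_real_mul _ (Real.exp_pos _), Complex.exp_mul_I,
    Complex.arg_cos_add_sin_mul_I ⟨h1, h2⟩]

lemma sector_slit {α : ℝ} (hα : α ≤ Real.pi) {z : ℂ} (hz : z ≠ 0) (ha : |z.arg| < α) :
    z ∈ Complex.slitPlane := by
  rw [Complex.mem_slitPlane_iff_arg]
  refine ⟨fun h => ?_, hz⟩
  rw [h, _root_.abs_of_nonneg Real.pi_pos.le] at ha
  linarith

lemma isOpen_sector {α : ℝ} (hα : α ≤ Real.pi) : IsOpen (sector α) := by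
  rw [isOpen_iff_mem_nhds]
  rintro z ⟨hz, ha⟩
  have hslit : z ∈ Complex.slitPlane := sector_slit hα hz ha
  have hc : ContinuousAt (fun w => |Complex.arg w|) z :=
    (Complex.continuousAt_arg hslit).abs
  have h1 : ∀ᶠ w in nhds z, |Complex.arg w| < α :=
    hc.eventually_lt continuousAt_const ha
  have h2 : ∀ᶠ w in nhds z, w ≠ 0 := eventually_ne_nhds hz
  filter_upwards [h1, h2] with w hw1 hw2
  exact ⟨hw2, hw1⟩

lemma mem_sector_of_pos {α t : ℝ} (hα : 0 < α) (ht : 0 < t) : (t : ℂ) ∈ sector α := by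
  refine ⟨Complex.ofReal_ne_zero.2 ht.ne', ?_⟩
  rw [Complex.arg_ofReal_of_nonneg ht.le]
  simpa using hα

lemma sector_mono {α α' : ℝ} (h : α ≤ α') : sector α ⊆ sector α' :=
  fun _ ⟨h0, h1⟩ => ⟨h0, h1.trans_le h⟩

open PhragmenLindelof in
lemma sector_PL {E : Type*} [NormedAddCommGroup E] [NormedSpace ℂ E]
    {β' ε C : ℝ} (hβ'0 : 0 < β') (hβ'π : β' < Real.pi) (σ : ℝ) (hσ : σ = 1 ∨ σ = -1)
    (K : ℂ → E)
    (hKd : ∀ z : ℂ, z ≠ 0 → |z.arg| ≤ β' → DifferentiableAt ℂ K z)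
    (hKC : ∀ z : ℂ, z ≠ 0 → |z.arg| ≤ β' → ‖K z‖ ≤ C)
    (hK0 : ∀ t : ℝ, 0 < t → ‖K (t : ℂ)‖ ≤ ε)
    (hKβ : ∀ z : ℂ, z ≠ 0 → σ * z.arg = β' → ‖K z‖ ≤ ε) :
    ∀ z : ℂ, z ≠ 0 → 0 ≤ σ * z.arg → σ * z.arg ≤ β' → ‖K z‖ ≤ ε := by
  intro z hz h0 h1
  set a : ℝ := min 0 (σ * β') with ha
  set b : ℝ := max 0 (σ * β') with hb
  have hbb' : b ≤ β' := by rcases hσ with rfl | rfl <;> simp [hb] <;> linarith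
  have haa' : -β' ≤ a := by rcases hσ with rfl | rfl <;> simp [ha] <;> linarith
  have hba : b - a = β' := by
    rcases hσ with rfl | rfl
    · rw [ha, hb, one_mul, min_eq_left hβ'0.le, max_eq_right hβ'0.le]; ring
    · rw [ha, hb, neg_one_mul, min_eq_right (by linarith), max_eq_left (by linarith)]; ring
  have hIm : ∀ w : ℂ, a ≤ w.im → w.im ≤ b →
      ((Complex.exp w).arg = w.im ∧ |(Complex.exp w).arg| ≤ β') := by
    intro w hwa hwb
    have hp := Real.pi_pos
    have h := my_arg_exp w (by linarith) (by linarith)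
    exact ⟨h, by rw [h]; exact abs_le.2 ⟨by linarith, by linarith⟩⟩
  have hdiff : ∀ w : ℂ, a ≤ w.im → w.im ≤ b →
      DifferentiableAt ℂ (fun w => K (Complex.exp w)) w := by
    intro w hwa hwb
    obtain ⟨he, hle⟩ := hIm w hwa hwb
    exact (hKd _ (Complex.exp_ne_zero w) hle).comp w Complex.differentiable_exp.differentiableAt
  have hsub : closure (Complex.im ⁻¹' Ioo a b) ⊆ Complex.im ⁻¹' Icc a b :=
    closure_minimal (Set.preimage_mono Set.Ioo_subset_Icc_self)
      (isClosed_Icc.preimage Complex.continuous_im)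
  have H := PhragmenLindelof.horizontal_strip (E := E)
      (f := fun w => K (Complex.exp w)) (a := a) (b := b) (C := ε) (z := Complex.log z)
      ?_ ?_ ?_ ?_ ?_ ?_
  · rwa [Complex.exp_log hz] at H
  · refine ⟨fun w hw => (hdiff w hw.1.le hw.2.le).differentiableWithinAt, fun w hw => ?_⟩
    have hw' := hsub hw
    exact ((hdiff w hw'.1 hw'.2).continuousAt).continuousWithinAt
  · refine ⟨0, by rw [hba]; positivity, 0, ?_⟩
    rw [Asymptotics.isBigO_iff]
    refine ⟨max C 0, ?_⟩
    rw [Filter.eventually_inf_principal]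
    apply Filter.Eventually.of_forall
    intro w hw
    have hm := hIm w hw.1.le hw.2.le
    simp only [zero_mul, Real.exp_zero, mul_one, Real.norm_eq_abs]
    calc ‖K (Complex.exp w)‖ ≤ C := hKC _ (Complex.exp_ne_zero w) hm.2
      _ ≤ max C 0 := le_max_left _ _
      _ ≤ max C 0 * |(1:ℝ)| := by norm_num
  · -- hle_a
    intro w hw
    rcases hσ with rfl | rfl
    · have hw0 : w.im = 0 := by rw [hw, ha, one_mul, min_eq_left hβ'0.le]
      have hwr : Complex.exp w = ((Real.exp w.re : ℝ) : ℂ) := by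
        rw [Complex.ofReal_exp]
        congr 1
        exact (Complex.ext (by simp) (by simp [hw0])).symm
      show ‖K (Complex.exp w)‖ ≤ ε
      rw [hwr]
      exact hK0 _ (Real.exp_pos _)
    · have hw0 : w.im = -β' := by rw [hw, ha, neg_one_mul, min_eq_right (by linarith)]
      have hm := hIm w (le_of_eq hw.symm) (hw ▸ (min_le_max.trans_eq rfl))
      exact hKβ _ (Complex.exp_ne_zero w) (by rw [hm.1, hw0]; ring)
  · -- hle_b
    intro w hw
    rcases hσ with rfl | rfl
    · have hw0 : w.im = β' := by rw [hw, hb, one_mul, max_eq_right hβ'0.le]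
      have hm := hIm w (hw ▸ min_le_max) (le_of_eq hw)
      exact hKβ _ (Complex.exp_ne_zero w) (by rw [hm.1, hw0]; ring)
    · have hw0 : w.im = 0 := by rw [hw, hb, neg_one_mul, max_eq_left (by linarith)]
      have hwr : Complex.exp w = ((Real.exp w.re : ℝ) : ℂ) := by
        rw [Complex.ofReal_exp]
        congr 1
        exact (Complex.ext (by simp) (by simp [hw0])).symm
      show ‖K (Complex.exp w)‖ ≤ ε
      rw [hwr]
      exact hK0 _ (Real.exp_pos _)
  · rw [Complex.log_im]
    rcases hσ with rfl | rfl
    · rw [ha, one_mul, min_eq_left hβ'0.le]; linarith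
    · rw [ha, neg_one_mul, min_eq_right (by linarith)]; linarith
  · rw [Complex.log_im]
    rcases hσ with rfl | rfl
    · rw [hb, one_mul, max_eq_right hβ'0.le]; linarith
    · rw [hb, neg_one_mul, max_eq_left (by linarith)]; linarith
lemma re_cpow_half_nonneg (z : ℂ) (hz : z ≠ 0) : 0 ≤ ((z) ^ (2⁻¹ : ℂ)).re := by
  rw [Complex.cpow_def_of_ne_zero hz, Complex.exp_re]
  apply mul_nonneg (Real.exp_pos _).le
  apply Real.cos_nonneg_of_mem_Icc
  have h1 := Complex.neg_pi_lt_arg z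
  have h2 := Complex.arg_le_pi z
  have h3 : (Complex.log z * 2⁻¹).im = z.arg * 2⁻¹ := by
    rw [Complex.mul_im]
    simp [Complex.log_im]
  rw [h3]
  have hp := Real.pi_pos
  constructor <;> linarith

lemma abs_cpow_I (c : ℝ) (z : ℂ) (hz : z ≠ 0) :
    norm (z ^ ((c : ℂ) * I)) = Real.exp (-(c * z.arg)) := by
  rw [Complex.norm_cpow_of_ne_zero hz]
  simp only [Complex.mul_re, Complex.mul_im, Complex.I_re, Complex.I_im, Complex.ofReal_re,
    Complex.ofReal_im, mul_zero, mul_one, zero_mul, sub_zero, zero_add, zero_sub, add_zero]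
  norm_num
  rw [← Real.exp_neg]
  ring_nf

lemma abs_cpow_half (z : ℂ) (hz : z ≠ 0) :
    norm (z ^ (2⁻¹ : ℂ)) = (norm z) ^ (2⁻¹ : ℝ) := by
  rw [Complex.norm_cpow_of_ne_zero hz]
  norm_num

lemma lemA {E : Type*} [NormedAddCommGroup E] [NormedSpace ℂ E]
    (β β' δ C ε : ℝ) (hβ0 : 0 < β) (hββ' : β < β') (hβ'π : β' < Real.pi)
    (hδ : 0 < δ) (hC1 : 1 ≤ C) (hε0 : 0 < ε) (hεC : ε ≤ C) :
    ∃ δ' > 0, δ' ≤ δ ∧ ∀ h : ℂ → E,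
      (∀ z : ℂ, z ≠ 0 → |z.arg| ≤ β' → DifferentiableAt ℂ h z) →
      (∀ z : ℂ, z ≠ 0 → |z.arg| ≤ β' → ‖h z‖ ≤ C) →
      (∀ t : ℝ, 0 < t → t < δ → ‖h (t : ℂ)‖ ≤ ε) →
      ∀ z : ℂ, z ≠ 0 → |z.arg| ≤ β → norm z < δ' →
        ‖h z‖ ≤ Real.exp 1 * (C ^ (β / β') * ε ^ (1 - β / β')) := by
  have hβ'0 : 0 < β' := hβ0.trans hββ'
  have hC0 : (0:ℝ) < C := zero_lt_one.trans_le hC1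
  have hCε1 : (1:ℝ) ≤ C / ε := (one_le_div hε0).2 hεC
  obtain ⟨N, hN⟩ : ∃ N : ℕ, C / ε < 2 ^ N := pow_unbounded_of_one_lt _ one_lt_two
  set γ : ℝ := Real.log (C / ε) / β' with hγdef
  have hγ0 : 0 ≤ γ := div_nonneg (Real.log_nonneg hCε1) hβ'0.le
  have hNpos : (0:ℝ) < ((N:ℝ) + 1) ^ 2 := by positivity
  refine ⟨δ / ((N:ℝ) + 1) ^ 2, by positivity, ?_, ?_⟩
  · rw [div_le_iff₀ hNpos]
    nlinarith [mul_nonneg hδ.le (mul_nonneg (Nat.cast_nonneg (α := ℝ) N) (Nat.cast_nonneg (α := ℝ) N)),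
      mul_nonneg hδ.le (Nat.cast_nonneg (α := ℝ) N)]
  intro h hd hdC hε
  -- basic objects
  set sb : ℂ → ℂ := fun z => 1 + (z / (δ:ℂ)) ^ (2⁻¹ : ℂ) with hsbdef
  set msc : ℂ → ℂ := fun z => ((sb z) ^ N)⁻¹ with hmdef
  have hδC : (δ : ℂ) ≠ 0 := Complex.ofReal_ne_zero.2 hδ.ne'
  have hsbre : ∀ z : ℂ, z ≠ 0 → 1 ≤ (sb z).re := by
    intro z hz
    have h1 := re_cpow_half_nonneg (z / (δ:ℂ)) (div_ne_zero hz hδC)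
    rw [hsbdef]
    simp only [Complex.add_re, Complex.one_re]
    linarith
  have hsbabs : ∀ z : ℂ, z ≠ 0 → 1 ≤ norm (sb z) := fun z hz =>
    (hsbre z hz).trans (Complex.re_le_norm _)
  have hsbne : ∀ z : ℂ, z ≠ 0 → sb z ≠ 0 := by
    intro z hz h0
    have h1 := hsbre z hz
    rw [h0] at h1
    simp at h1
    linarith
  have hmabs : ∀ z : ℂ, z ≠ 0 → norm (msc z) ≤ 1 := by
    intro z hz
    rw [hmdef]
    simp only [norm_inv, norm_pow]
    have h1 : (1:ℝ) ≤ norm (sb z) ^ N := one_le_pow₀ (hsbabs z hz)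
    exact inv_le_one_of_one_le₀ h1
  have hargdiv : ∀ z : ℂ, (z / (δ:ℂ)).arg = z.arg := by
    intro z
    rw [show z / (δ:ℂ) = ((δ⁻¹ : ℝ) : ℂ) * z by push_cast; ring,
      Complex.arg_real_mul _ (inv_pos.2 hδ)]
  -- differentiability of the scalar weight functions
  have hmd : ∀ z : ℂ, z ≠ 0 → |z.arg| < Real.pi → DifferentiableAt ℂ msc z := by
    intro z hz hza
    have hslit : z / (δ:ℂ) ∈ Complex.slitPlane := by
      rw [Complex.mem_slitPlane_iff_arg, hargdiv]
      refine ⟨fun hp => ?_, div_ne_zero hz hδC⟩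
      rw [hp, _root_.abs_of_nonneg Real.pi_pos.le] at hza
      exact lt_irrefl _ hza
    rw [hmdef]
    apply DifferentiableAt.inv
    · apply DifferentiableAt.pow
      rw [hsbdef]
      exact (differentiableAt_const _).add
        ((differentiableAt_fun_id.div_const _).cpow (differentiableAt_const _) hslit)
    · exact pow_ne_zero _ (hsbne _ hz)
  have hwd : ∀ (c : ℝ) (z : ℂ), z ≠ 0 → |z.arg| < Real.pi →
      DifferentiableAt ℂ (fun w : ℂ => w ^ ((c : ℂ) * I)) z := by
    intro c z hz hza
    have hslit : z ∈ Complex.slitPlane := by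
      rw [Complex.mem_slitPlane_iff_arg]
      refine ⟨fun hp => ?_, hz⟩
      rw [hp, _root_.abs_of_nonneg Real.pi_pos.le] at hza
      exact lt_irrefl _ hza
    exact differentiableAt_fun_id.cpow (differentiableAt_const _) hslit
  -- norm formula for the weighted function
  have hKnorm : ∀ (c : ℝ) (z : ℂ), z ≠ 0 →
      ‖(msc z * z ^ ((c:ℂ) * I)) • h z‖
        = norm (msc z) * (Real.exp (-(c * z.arg)) * ‖h z‖) := by
    intro c z hz
    rw [norm_smul, norm_mul, abs_cpow_I c z hz, mul_assoc]
  -- smallness of m on the real axis beyond δ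
  have hmsmall : ∀ t : ℝ, δ ≤ t → norm (msc (t:ℂ)) ≤ ((2:ℝ) ^ N)⁻¹ := by
    intro t ht
    have ht0 : (0:ℝ) < t := hδ.trans_le ht
    have h1 : (1:ℝ) ≤ (t / δ) ^ (2⁻¹ : ℝ) := Real.one_le_rpow ((one_le_div hδ).2 ht) (by norm_num)
    have hcast : ((t:ℂ) / (δ:ℂ)) = ((t / δ : ℝ) : ℂ) := by push_cast; ring
    have h2 : sb (t:ℂ) = 1 + (((t/δ) ^ (2⁻¹:ℝ) : ℝ) : ℂ) := by
      rw [hsbdef]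
      simp only
      rw [hcast, Complex.ofReal_cpow (by positivity)]
      norm_num
    have h3 : (2:ℝ) ≤ norm (sb (t:ℂ)) := by
      rw [h2, ← Complex.ofReal_one, ← Complex.ofReal_add, Complex.norm_real, Real.norm_eq_abs]
      calc (2:ℝ) ≤ 1 + (t/δ) ^ (2⁻¹:ℝ) := by linarith
        _ ≤ |1 + (t/δ) ^ (2⁻¹:ℝ)| := le_abs_self _
    rw [hmdef]
    simp only [norm_inv, norm_pow]
    have hp : (0:ℝ) < 2 ^ N := by positivity
    apply inv_anti₀ hp
    exact pow_le_pow_left₀ (by norm_num) h3 N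
  -- lower bound for m near the origin
  have hmbig : ∀ z : ℂ, z ≠ 0 → norm z ≤ δ / ((N:ℝ)+1) ^ 2 →
      (Real.exp 1)⁻¹ ≤ norm (msc z) := by
    intro z hz hzle
    have hdivne : z / (δ:ℂ) ≠ 0 := div_ne_zero hz hδC
    have hzd : norm (z / (δ:ℂ)) ≤ (((N:ℝ)+1) ^ 2)⁻¹ := by
      rw [norm_div, Complex.norm_real, Real.norm_eq_abs, _root_.abs_of_nonneg hδ.le, div_le_iff₀ hδ]
      calc norm z ≤ δ / ((N:ℝ)+1)^2 := hzle
        _ = (((N:ℝ)+1)^2)⁻¹ * δ := by ring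
    set x := (norm (z / (δ:ℂ))) ^ (2⁻¹:ℝ) with hxdef
    have hx0 : 0 ≤ x := Real.rpow_nonneg (norm_nonneg _) _
    have hx2 : x ^ 2 = norm (z / (δ:ℂ)) := by
      rw [hxdef, ← Real.rpow_natCast _ 2, ← Real.rpow_mul (norm_nonneg _)]
      norm_num
    have hNinv : (0:ℝ) < ((N:ℝ)+1)⁻¹ := by positivity
    have hinv : (((N:ℝ)+1)^2)⁻¹ = (((N:ℝ)+1)⁻¹)^2 := by rw [← inv_pow]
    have hxle : x ≤ ((N:ℝ)+1)⁻¹ := by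
      nlinarith [hx2, hzd, hx0, hinv, mul_pos hNinv hNinv]
    have habs : norm (sb z) ≤ 1 + x := by
      rw [hsbdef]
      simp only
      calc norm (1 + (z / (δ:ℂ)) ^ (2⁻¹:ℂ)) ≤
          norm 1 + norm ((z / (δ:ℂ)) ^ (2⁻¹:ℂ)) := norm_add_le _ _
        _ = 1 + x := by rw [norm_one, abs_cpow_half _ hdivne]
    have hNx : (N:ℝ) * x ≤ 1 := by
      calc (N:ℝ) * x ≤ (N:ℝ) * ((N:ℝ)+1)⁻¹ := by
            apply mul_le_mul_of_nonneg_left hxle (Nat.cast_nonneg N)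
        _ = (N:ℝ) / ((N:ℝ)+1) := by ring
        _ ≤ 1 := div_le_one_of_le₀ (by linarith) (by positivity)
    have hpow : norm (sb z) ^ N ≤ Real.exp 1 := by
      calc norm (sb z) ^ N ≤ (1 + x) ^ N := by
            apply pow_le_pow_left₀ (norm_nonneg _) habs
        _ ≤ Real.exp x ^ N := by
            apply pow_le_pow_left₀ (by linarith) (by linarith [Real.add_one_le_exp x])
        _ = Real.exp ((N:ℝ) * x) := (Real.exp_nat_mul x N).symm
        _ ≤ Real.exp 1 := Real.exp_le_exp.2 hNx
    rw [hmdef]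
    simp only [norm_inv, norm_pow]
    exact inv_anti₀ (pow_pos (zero_lt_one.trans_le (hsbabs z hz)) N) hpow
  -- global bound for weighted function on the closed sector
  have hKCall : ∀ (σ : ℝ), |σ| = 1 → ∀ z : ℂ, z ≠ 0 → |z.arg| ≤ β' →
      ‖(msc z * z ^ ((↑(σ * γ) : ℂ) * I)) • h z‖ ≤ C * Real.exp (γ * β') := by
    intro σ hσ z hz harg
    rw [hKnorm _ _ hz]
    have hexp : Real.exp (-(σ * γ * z.arg)) ≤ Real.exp (γ * β') := by
      rw [Real.exp_le_exp]
      have h1 : |σ * γ * z.arg| ≤ γ * β' := by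
        rw [abs_mul, abs_mul, hσ, one_mul, _root_.abs_of_nonneg hγ0]
        exact mul_le_mul_of_nonneg_left harg hγ0
      linarith [neg_abs_le (σ * γ * z.arg), (abs_le.1 h1).2, (abs_le.1 h1).1]
    calc norm (msc z) * (Real.exp (-(σ * γ * z.arg)) * ‖h z‖)
        ≤ 1 * (Real.exp (γ * β') * C) := by
          gcongr
          · exact hmabs z hz
          · exact hdC z hz harg
      _ = C * Real.exp (γ * β') := by ring
  -- bound on the positive real axis
  have hK0 : ∀ (σ : ℝ), ∀ t : ℝ, 0 < t →
      ‖(msc (t:ℂ) * (t:ℂ) ^ ((↑(σ * γ) : ℂ) * I)) • h (t:ℂ)‖ ≤ ε := by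
    intro σ t ht
    have htne : (t:ℂ) ≠ 0 := Complex.ofReal_ne_zero.2 ht.ne'
    rw [hKnorm _ _ htne, Complex.arg_ofReal_of_nonneg ht.le, mul_zero, neg_zero, Real.exp_zero]
    rcases lt_or_ge t δ with hlt | hge
    · calc norm (msc (t:ℂ)) * (1 * ‖h (t:ℂ)‖) ≤ 1 * (1 * ε) := by
            gcongr
            · exact hmabs _ htne
            · exact hε t ht hlt
        _ = ε := by ring
    · have harg0 : |((t:ℂ)).arg| ≤ β' := by
        rw [Complex.arg_ofReal_of_nonneg ht.le]
        simpa using hβ'0.le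
      have h2N : (0:ℝ) < 2 ^ N := by positivity
      calc norm (msc (t:ℂ)) * (1 * ‖h (t:ℂ)‖) ≤ ((2:ℝ) ^ N)⁻¹ * (1 * C) := by
            gcongr
            · exact hmsmall t hge
            · exact hdC _ htne harg0
        _ = C / 2 ^ N := by ring
        _ ≤ ε := by
            rw [div_le_iff₀ h2N]
            rw [div_lt_iff₀ hε0] at hN
            nlinarith
  -- bound on the ray arg = ± β'
  have hKβ : ∀ (σ : ℝ), |σ| = 1 → ∀ z : ℂ, z ≠ 0 → σ * z.arg = β' →
      ‖(msc z * z ^ ((↑(σ * γ) : ℂ) * I)) • h z‖ ≤ ε := by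
    intro σ hσ z hz hae
    rw [hKnorm _ _ hz]
    have hexp : Real.exp (-(σ * γ * z.arg)) = ε / C := by
      have h2 : σ * γ * z.arg = γ * β' := by rw [← hae]; ring
      rw [h2, hγdef, div_mul_cancel₀ _ hβ'0.ne', Real.exp_neg, Real.exp_log (by positivity),
        inv_div]
    have harg' : |z.arg| ≤ β' := by
      have h2 : |σ * z.arg| = β' := by rw [hae, _root_.abs_of_nonneg hβ'0.le]
      rw [abs_mul, hσ, one_mul] at h2
      exact h2.le
    rw [hexp]
    calc norm (msc z) * (ε / C * ‖h z‖) ≤ 1 * (ε / C * C) := by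
          gcongr
          · exact hmabs z hz
          · exact hdC z hz harg'
      _ = ε := by field_simp
  -- Phragmen-Lindelof on both half-sectors
  have key : ∀ (σ : ℝ), σ = 1 ∨ σ = -1 → ∀ z : ℂ, z ≠ 0 → 0 ≤ σ * z.arg → σ * z.arg ≤ β' →
      ‖(msc z * z ^ ((↑(σ * γ) : ℂ) * I)) • h z‖ ≤ ε := by
    intro σ hσ
    have hσ1 : |σ| = 1 := by rcases hσ with rfl | rfl <;> norm_num
    apply sector_PL hβ'0 hβ'π σ hσ
      (K := fun z => (msc z * z ^ ((↑(σ * γ) : ℂ) * I)) • h z)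
      (C := C * Real.exp (γ * β'))
    · intro z hz hle
      have hlt : |z.arg| < Real.pi := lt_of_le_of_lt hle hβ'π
      exact ((hmd z hz hlt).mul (hwd (σ * γ) z hz hlt)).smul (hd z hz hle)
    · exact fun z hz hle => hKCall σ hσ1 z hz hle
    · exact fun t ht => hK0 σ t ht
    · exact fun z hz hae => hKβ σ hσ1 z hz hae
  -- final estimate
  intro z hz hargβ habsz
  set σ : ℝ := if 0 ≤ z.arg then 1 else -1 with hσdef
  have hσor : σ = 1 ∨ σ = -1 := by rw [hσdef]; split_ifs <;> simp
  have hs : σ * z.arg = |z.arg| := by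
    rw [hσdef]
    split_ifs with hcase
    · rw [one_mul, _root_.abs_of_nonneg hcase]
    · rw [neg_one_mul, _root_.abs_of_neg (not_le.1 hcase)]
  have h0 : 0 ≤ σ * z.arg := by rw [hs]; exact abs_nonneg _
  have h1 : σ * z.arg ≤ β' := by rw [hs]; linarith
  have hkey := key σ hσor z hz h0 h1
  rw [hKnorm _ _ hz] at hkey
  have hm1 : (Real.exp 1)⁻¹ ≤ norm (msc z) := hmbig z hz habsz.le
  have hw1 : Real.exp (-(γ * β)) ≤ Real.exp (-(σ * γ * z.arg)) := by
    rw [Real.exp_le_exp]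
    have h2 : σ * γ * z.arg = γ * (σ * z.arg) := by ring
    rw [h2, hs]
    have h3 : γ * |z.arg| ≤ γ * β := mul_le_mul_of_nonneg_left hargβ hγ0
    linarith
  have hA : ((Real.exp 1)⁻¹ * Real.exp (-(γ * β))) * ‖h z‖ ≤ ε := by
    calc ((Real.exp 1)⁻¹ * Real.exp (-(γ * β))) * ‖h z‖
        = (Real.exp 1)⁻¹ * (Real.exp (-(γ * β)) * ‖h z‖) := by ring
      _ ≤ norm (msc z) * (Real.exp (-(σ * γ * z.arg)) * ‖h z‖) := by
          gcongr
      _ ≤ ε := hkey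
  have hApos : (0:ℝ) < (Real.exp 1)⁻¹ * Real.exp (-(γ * β)) := by positivity
  have hfinal : ‖h z‖ ≤ ε * (Real.exp 1 * Real.exp (γ * β)) := by
    have hx : ‖h z‖ ≤ ε / ((Real.exp 1)⁻¹ * Real.exp (-(γ * β))) :=
      (le_div_iff₀ hApos).2 (by linarith [mul_comm (((Real.exp 1)⁻¹ * Real.exp (-(γ * β)))) ‖h z‖])
    calc ‖h z‖ ≤ ε / ((Real.exp 1)⁻¹ * Real.exp (-(γ * β))) := hx
      _ = ε * (Real.exp 1 * Real.exp (γ * β)) := by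
          rw [Real.exp_neg]
          field_simp
  have hexpγβ : Real.exp (γ * β) = (C / ε) ^ (β / β') := by
    rw [Real.rpow_def_of_pos (by positivity), hγdef]
    congr 1
    field_simp
  have hεθ : (0:ℝ) < ε ^ (β / β') := Real.rpow_pos_of_pos hε0 _
  calc ‖h z‖ ≤ ε * (Real.exp 1 * Real.exp (γ * β)) := hfinal
    _ = Real.exp 1 * (C ^ (β / β') * ε ^ (1 - β / β')) := by
        rw [hexpγβ, Real.div_rpow hC0.le hε0.le, Real.rpow_sub hε0, Real.rpow_one]
        field_simp
        try ring

end SectorHelpers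

/-- For a holomorphic `f` on a product of sectors, bounded on every smaller product of
sectors, `f(t) → x` along positive reals `t → 0` iff `f(z) → x` as `z → 0` with
`z ∈ Σ_{β₁} × … × Σ_{βₙ}`. -/
theorem sectorial_limit_at_zero [CompleteSpace X]
    (n : ℕ) (hn : 1 ≤ n) (α : Fin n → ℝ) (hα : ∀ j, 0 < α j ∧ α j ≤ Real.pi)
    (f : (Fin n → ℂ) → X)
    (hf : DifferentiableOn ℂ f {z : Fin n → ℂ | ∀ j, z j ∈ sector (α j)})
    (hbd : ∀ β : Fin n → ℝ, (∀ j, β j ∈ Set.Ioo 0 (α j)) →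
      ∃ C, ∀ z : Fin n → ℂ, (∀ j, z j ∈ sector (β j)) → ‖f z‖ ≤ C)
    (β : Fin n → ℝ) (hβ : ∀ j, β j ∈ Set.Ioo 0 (α j)) (x : X) :
    (∀ ε > 0, ∃ δ > 0, ∀ t : Fin n → ℝ, (∀ j, 0 < t j ∧ t j < δ) →
        ‖f (fun j => (t j : ℂ)) - x‖ < ε) ↔
    (∀ ε > 0, ∃ δ > 0, ∀ z : Fin n → ℂ,
        (∀ j, z j ∈ sector (β j) ∧ ‖z j‖ < δ) → ‖f z - x‖ < ε) := by

  constructor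
  · intro hreal
    set β' : Fin n → ℝ := fun j => (β j + α j) / 2 with hβ'def
    set β'' : Fin n → ℝ := fun j => (β' j + α j) / 2 with hβ''def
    have hfacts : ∀ j, 0 < β j ∧ β j < β' j ∧ β' j < β'' j ∧ β'' j < α j ∧
        β' j < Real.pi ∧ 0 < β'' j ∧ 0 < β' j := by
      intro j
      obtain ⟨h0, h1⟩ := hβ j
      obtain ⟨h2, h3⟩ := hα j
      simp only [hβ'def, hβ''def]
      refine ⟨h0, by linarith, by linarith, by linarith, by linarith, by linarith, by linarith⟩
    obtain ⟨C₀, hC₀⟩ := hbd β'' (fun j => ⟨(hfacts j).2.2.2.2.2.1,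
      (hfacts j).2.2.2.1⟩)
    set C : ℝ := max (C₀ + ‖x‖) 1 with hCdef
    have hC1 : 1 ≤ C := le_max_right _ _
    have hC0' : (0:ℝ) < C := zero_lt_one.trans_le hC1
    have hgbound : ∀ z : Fin n → ℂ, (∀ j, z j ∈ sector (β'' j)) → ‖f z - x‖ ≤ C := by
      intro z hzj
      calc ‖f z - x‖ ≤ ‖f z‖ + ‖x‖ := norm_sub_le _ _
        _ ≤ C₀ + ‖x‖ := add_le_add_left (hC₀ z hzj) _
        _ ≤ C := le_max_left _ _
    have hopen : IsOpen {z : Fin n → ℂ | ∀ j, z j ∈ sector (α j)} := by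
      have he : {z : Fin n → ℂ | ∀ j, z j ∈ sector (α j)}
          = Set.pi Set.univ (fun j => sector (α j)) := by
        ext z; simp [Set.mem_pi]
      rw [he]
      exact isOpen_set_pi Set.finite_univ (fun j _ => isOpen_sector (hα j).2)
    have hgd : ∀ z : Fin n → ℂ, (∀ j, z j ∈ sector (α j)) →
        DifferentiableAt ℂ (fun w => f w - x) z := by
      intro z hzj
      exact ((hf z hzj).differentiableAt (hopen.mem_nhds hzj)).sub_const x
    have QQ : ∀ k : ℕ, k ≤ n → ∀ ε : ℝ, 0 < ε → ∃ δ : ℝ, 0 < δ ∧ ∀ z : Fin n → ℂ,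
        (∀ j : Fin n, ((j:ℕ) < k → z j ∈ sector (β j) ∧ norm (z j) < δ) ∧
          (k ≤ (j:ℕ) → ∃ t : ℝ, 0 < t ∧ t < δ ∧ z j = (t:ℂ))) → ‖f z - x‖ ≤ ε := by
      intro k
      induction k with
      | zero =>
        intro _ ε hε
        obtain ⟨δ, hδ0, hδ⟩ := hreal ε hε
        refine ⟨δ, hδ0, fun z hz => ?_⟩
        choose t ht0 htδ hteq using fun j => (hz j).2 (Nat.zero_le _)
        have hzeq : z = fun j => ((t j : ℝ) : ℂ) := funext fun j => hteq j
        rw [hzeq]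
        exact (hδ t (fun j => ⟨ht0 j, htδ j⟩)).le
      | succ k ih =>
        intro hk ε hε
        have hkn : k < n := hk
        set j₀ : Fin n := ⟨k, hkn⟩ with hj₀
        obtain ⟨hb0, hb1, hb2, hb3, hb5, hb6, hb4⟩ := hfacts j₀
        set θ : ℝ := β j₀ / β' j₀ with hθdef
        have hθ0 : 0 < θ := div_pos hb0 hb4
        have hθ1 : θ < 1 := (div_lt_one hb4).2 hb1
        have hsubθ : (0:ℝ) < 1 - θ := by linarith
        have hCθ : (0:ℝ) < C ^ θ := Real.rpow_pos_of_pos hC0' _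
        have hbase : (0:ℝ) < ε / (Real.exp 1 * C ^ θ) := by positivity
        set ε' : ℝ := min C ((ε / (Real.exp 1 * C ^ θ)) ^ ((1 - θ)⁻¹ : ℝ)) with hε'def
        have hε'0 : 0 < ε' := lt_min hC0' (Real.rpow_pos_of_pos hbase _)
        have hε'C : ε' ≤ C := min_le_left _ _
        have hbound : Real.exp 1 * (C ^ θ * ε' ^ (1 - θ)) ≤ ε := by
          have h1 : ε' ^ (1 - θ) ≤ ε / (Real.exp 1 * C ^ θ) := by
            calc ε' ^ (1 - θ)
                ≤ ((ε / (Real.exp 1 * C ^ θ)) ^ ((1 - θ)⁻¹ : ℝ)) ^ ((1 - θ) : ℝ) :=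
                  Real.rpow_le_rpow hε'0.le (min_le_right _ _) hsubθ.le
              _ = ε / (Real.exp 1 * C ^ θ) := by
                  rw [← Real.rpow_mul hbase.le, inv_mul_cancel₀ hsubθ.ne', Real.rpow_one]
          calc Real.exp 1 * (C ^ θ * ε' ^ (1 - θ))
              ≤ Real.exp 1 * (C ^ θ * (ε / (Real.exp 1 * C ^ θ))) := by gcongr
            _ = ε := by field_simp
        obtain ⟨δk, hδk0, hδk⟩ := ih (le_of_lt hkn) ε' hε'0
        obtain ⟨δ', hδ'0, hδ'le, hlem⟩ := lemA (E := X) (β j₀) (β' j₀) δk C ε'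
          hb0 hb1 hb5 hδk0 hC1 hε'0 hε'C
        refine ⟨δ', hδ'0, fun z hz => ?_⟩
        -- identify indices
        have hjlt : ∀ j : Fin n, (j:ℕ) < k + 1 → j ≠ j₀ → (j:ℕ) < k := by
          intro j hj hne
          have : (j:ℕ) ≠ k := fun hh => hne (Fin.ext hh)
          omega
        have hjgt : ∀ j : Fin n, k ≤ (j:ℕ) → j ≠ j₀ → k + 1 ≤ (j:ℕ) := by
          intro j hj hne
          have : (j:ℕ) ≠ k := fun hh => hne (Fin.ext hh)
          omega
        set h : ℂ → X := fun w => f (Function.update z j₀ w) - x with hhdef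
        have hupd : ∀ w : ℂ, DifferentiableAt ℂ (fun w : ℂ => Function.update z j₀ w) w := by
          intro w
          rw [differentiableAt_pi]
          intro j
          rcases eq_or_ne j j₀ with rfl | hne
          · simp only [Function.update_self]
            exact differentiableAt_fun_id
          · simp only [Function.update_of_ne hne]
            exact differentiableAt_const _
        -- coordinates of the update lie in sectors
        have hcoord : ∀ (w : ℂ), w ≠ 0 → |w.arg| ≤ β' j₀ → ∀ b : Fin n → ℝ,
            (∀ j, β j < b j) → (β' j₀ < b j₀) → (∀ j, 0 < b j) →
            ∀ j, Function.update z j₀ w j ∈ sector (b j) := by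
          intro w hw hwarg b hbβ hbj₀ hb0' j
          rcases eq_or_ne j j₀ with rfl | hne
          · rw [Function.update_self]
            exact ⟨hw, lt_of_le_of_lt hwarg hbj₀⟩
          · rw [Function.update_of_ne hne]
            rcases lt_or_ge ((j:ℕ)) (k+1) with hlt | hge
            · exact sector_mono (hbβ j).le ((hz j).1 hlt).1
            · obtain ⟨t, ht0, _, hteq⟩ := (hz j).2 (by omega)
              rw [hteq]
              exact mem_sector_of_pos (hb0' j) ht0
        -- apply the one-variable lemma
        have hd1 : ∀ w : ℂ, w ≠ 0 → |w.arg| ≤ β' j₀ → DifferentiableAt ℂ h w := by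
          intro w hw hwarg
          have hmem : ∀ j, Function.update z j₀ w j ∈ sector (α j) :=
            hcoord w hw hwarg α (fun j => ((hfacts j).2.1).trans
              (((hfacts j).2.2.1).trans (hfacts j).2.2.2.1))
              (hb2.trans hb3) (fun j => (hα j).1)
          exact (hgd _ hmem).comp w (hupd w)
        have hd2 : ∀ w : ℂ, w ≠ 0 → |w.arg| ≤ β' j₀ → ‖h w‖ ≤ C := by
          intro w hw hwarg
          exact hgbound _ (hcoord w hw hwarg β''
            (fun j => ((hfacts j).2.1).trans (hfacts j).2.2.1) hb2
            (fun j => (hfacts j).2.2.2.2.2.1))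
        have hd3 : ∀ t : ℝ, 0 < t → t < δk → ‖h (t:ℂ)‖ ≤ ε' := by
          intro t ht0 htδ
          apply hδk
          intro j
          constructor
          · intro hjk
            have hne : j ≠ j₀ := by
              intro hh
              rw [hh] at hjk
              simp [hj₀] at hjk
            rw [Function.update_of_ne hne]
            have hj' := (hz j).1 (by omega)
            exact ⟨hj'.1, lt_of_lt_of_le hj'.2 hδ'le⟩
          · intro hjk
            rcases eq_or_ne j j₀ with rfl | hne
            · rw [Function.update_self]
              exact ⟨t, ht0, htδ, rfl⟩
            · obtain ⟨s, hs0, hsδ, hseq⟩ := (hz j).2 (hjgt j hjk hne)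
              rw [Function.update_of_ne hne]
              exact ⟨s, hs0, lt_of_lt_of_le hsδ hδ'le, hseq⟩
        have hj₀mem := (hz j₀).1 (by simp [hj₀])
        have hval := hlem h hd1 hd2 hd3 (z j₀) hj₀mem.1.1 hj₀mem.1.2.le hj₀mem.2
        have heq : h (z j₀) = f z - x := by
          rw [hhdef]
          simp only [Function.update_eq_self]
        rw [heq] at hval
        exact hval.trans hbound
    intro ε hε
    obtain ⟨δ, hδ0, hQ⟩ := QQ n le_rfl (ε/2) (by positivity)
    refine ⟨δ, hδ0, fun z hz => ?_⟩
    have hres := hQ z (fun j => ⟨fun _ => hz j, fun hjk => absurd hjk (not_le.2 j.isLt)⟩)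
    linarith
  · intro hsec ε hε
    obtain ⟨δ, hδ0, hδ⟩ := hsec ε hε
    refine ⟨δ, hδ0, fun t ht => ?_⟩
    apply hδ
    intro j
    obtain ⟨h0, h1⟩ := ht j
    refine ⟨mem_sector_of_pos (hβ j).1 h0, ?_⟩
    rw [Complex.norm_real, Real.norm_eq_abs, _root_.abs_of_pos h0]
    exact h1
end
end
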